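/- arXiv:2603.02400 — 4 statements merged into one kernel-verified Lean document; each statement's English description precedes it below -/
import Mathlib

section
/- Let T be a bidirected tree rooted at a vertex z, and let r^- be a converging request, r^+ a diverging request, and r^∨ a unimodal request in T. Then at least two of the three requests r^-, r^+, r^∨ interfere with each other. -/
open SimpleGraph

/-- A request in a bidirected tree `T`: a directed path of length at least 1,
encoded as a path (walk without vertex repetition) in the underlying tree. -/
structure Request {V : Type*} (T : SimpleGraph V) where
  s : V
  t : V
  toWalk : T.Walk s t
  isPath : toWalk.IsPath
  one_le_length : 1 ≤ toWalk.length

namespace Request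

variable {V : Type*} {T : SimpleGraph V}

/-- The second vertex `s_r⁺` of a request. -/
def sPlus (r : Request T) : V := r.toWalk.getVert 1

/-- The penultimate vertex `t_r⁻` of a request. -/
def tMinus (r : Request T) : V := r.toWalk.getVert (r.toWalk.length - 1)

end Request

variable {V : Type*}

/-- `r` interferes on `r'` if the unique path from `s_r` to `t_{r'}` in the tree `T`
has first arc the emission arc of `r` and last arc the reception arc of `r'`. -/
def InterferesOn (T : SimpleGraph V) (r r' : Request T) : Prop :=
  ∃ p : T.Walk r.s r'.t, p.IsPath ∧ 1 ≤ p.length ∧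
    p.getVert 1 = r.sPlus ∧ p.getVert (p.length - 1) = r'.tMinus

/-- Two requests interfere if one of them interferes on the other. -/
def Interfere (T : SimpleGraph V) (r r' : Request T) : Prop :=
  InterferesOn T r r' ∨ InterferesOn T r' r

/-- `x` is an ancestor of `y` in the tree `T` rooted at `z`:
`x` lies on the unique path from `z` to `y`. -/
def Ancestor (T : SimpleGraph V) (z x y : V) : Prop :=
  ∃ p : T.Walk z y, p.IsPath ∧ x ∈ p.support

/-- Two vertices are related if one is an ancestor of the other. -/
def Related (T : SimpleGraph V) (z x y : V) : Prop :=
  Ancestor T z x y ∨ Ancestor T z y x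

/-- A request is converging (w.r.t. root `z`) if all its arcs are directed towards `z`,
i.e. the head of every arc is an ancestor of its tail. -/
def Converging (T : SimpleGraph V) (z : V) (r : Request T) : Prop :=
  ∀ i < r.toWalk.length, Ancestor T z (r.toWalk.getVert (i+1)) (r.toWalk.getVert i)

/-- A request is diverging (w.r.t. root `z`) if all its arcs are directed away from `z`,
i.e. the tail of every arc is an ancestor of its head. -/
def Diverging (T : SimpleGraph V) (z : V) (r : Request T) : Prop :=
  ∀ i < r.toWalk.length, Ancestor T z (r.toWalk.getVert i) (r.toWalk.getVert (i+1))

/-- A request is unimodal (w.r.t. root `z`) if it is neither converging nor diverging. -/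
def Unimodal (T : SimpleGraph V) (z : V) (r : Request T) : Prop :=
  ¬ Converging T z r ∧ ¬ Diverging T z r

/-- `m` is the middle of the request `r` (w.r.t. root `z`): the vertex of `r`
closest to the root, i.e. the vertex of `r` which is an ancestor of every vertex of `r`. -/
def IsMiddle (T : SimpleGraph V) (z : V) (r : Request T) (m : V) : Prop :=
  m ∈ r.toWalk.support ∧ ∀ y ∈ r.toWalk.support, Ancestor T z m y

/-- The interference graph of a family of requests: two (indices of) requests are
adjacent iff they are distinct and the requests interfere. -/
def interferenceGraph (T : SimpleGraph V) {ι : Type*} (f : ι → Request T) :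
    SimpleGraph ι where
  Adj i j := i ≠ j ∧ Interfere T (f i) (f j)
  symm := by
    constructor
    intro i j h
    exact ⟨h.1.symm, h.2.symm⟩
  loopless := by
    constructor
    intro i h
    exact h.1 rfl

/-- The interference graph of a set of requests. -/
def interGraph (T : SimpleGraph V) (R : Set (Request T)) : SimpleGraph ↥R :=
  interferenceGraph T (fun r => (r : Request T))

/-- The pair `(a, b)` is an arc joining two consecutive vertices of the
bidirected path corresponding to the walk `p` (in either direction). -/
def ArcOn (T : SimpleGraph V) {u v : V} (p : T.Walk u v) (a b : V) : Prop :=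
  ∃ j < p.length, (p.getVert j = a ∧ p.getVert (j+1) = b) ∨
    (p.getVert j = b ∧ p.getVert (j+1) = a)

/-- The request `r` shares an arc with the bidirected path corresponding to
the walk `p`. -/
def SharesArc (T : SimpleGraph V) {u v : V} (p : T.Walk u v) (r : Request T) : Prop :=
  ∃ i < r.toWalk.length, ArcOn T p (r.toWalk.getVert i) (r.toWalk.getVert (i+1))

/-- A leaf of a tree: a vertex with at most one neighbour. -/
def IsLeaf (T : SimpleGraph V) (y : V) : Prop :=
  {w | T.Adj y w}.Subsingleton

/-- A comparability graph: there is a partial order on the vertices such that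
two distinct vertices are adjacent iff they are comparable. -/
def IsComparabilityGraph {α : Type*} (G : SimpleGraph α) : Prop :=
  ∃ le : α → α → Prop, IsPartialOrder α le ∧ ∀ a b, G.Adj a b ↔ a ≠ b ∧ (le a b ∨ le b a)

/-- A cobipartite graph: the vertex set can be partitioned into two cliques. -/
def IsCobipartite {α : Type*} (G : SimpleGraph α) : Prop :=
  ∃ A : Set α, G.IsClique A ∧ G.IsClique Aᶜ


section TreeAux

open SimpleGraph Walk

variable {V : Type*} {T : SimpleGraph V}

/-- The canonical path between two vertices of a tree. -/
noncomputable def tP (hT : T.IsTree) (u v : V) : T.Walk u v :=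
  (hT.existsUnique_path u v).choose

lemma tP_isPath (hT : T.IsTree) (u v : V) : (tP hT u v).IsPath :=
  (hT.existsUnique_path u v).choose_spec.1

lemma tP_unique (hT : T.IsTree) {u v : V} {p : T.Walk u v} (hp : p.IsPath) :
    p = tP hT u v :=
  (hT.existsUnique_path u v).choose_spec.2 p hp

lemma tP_length_pos (hT : T.IsTree) {s t : V} (h : s ≠ t) : 1 ≤ (tP hT s t).length := by
  by_contra h'
  exact h (Walk.eq_of_length_eq_zero (p := tP hT s t) (by omega))

lemma tP_reverse (hT : T.IsTree) (s t : V) : (tP hT s t).reverse = tP hT t s :=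
  tP_unique hT (tP_isPath hT s t).reverse

lemma tP_getVert_pred (hT : T.IsTree) (s t : V) :
    (tP hT s t).getVert ((tP hT s t).length - 1) = (tP hT t s).getVert 1 := by
  rw [← tP_reverse hT s t, Walk.getVert_reverse]

lemma path_getVert_inj {u v : V} (p : T.Walk u v) (hp : p.IsPath) :
    ∀ i j, i ≤ p.length → j ≤ p.length → p.getVert i = p.getVert j → i = j := by
  induction p with
  | nil => intro i j hi hj _; simp only [Walk.length_nil, Nat.le_zero] at hi hj; omega
  | @cons a b c h q ih =>
    rw [Walk.cons_isPath_iff] at hp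
    intro i j hi hj hij
    match i, j with
    | 0, 0 => rfl
    | 0, j+1 =>
      exfalso
      apply hp.2
      rw [Walk.mem_support_iff_exists_getVert]
      exact ⟨j, by simpa [Walk.getVert_zero, Walk.getVert_cons_succ] using hij.symm,
        by simpa [Walk.length_cons] using hj⟩
    | i+1, 0 =>
      exfalso
      apply hp.2
      rw [Walk.mem_support_iff_exists_getVert]
      exact ⟨i, by simpa [Walk.getVert_zero, Walk.getVert_cons_succ] using hij,
        by simpa [Walk.length_cons] using hi⟩
    | i+1, j+1 =>
      have := ih hp.1 i j (by simpa [Walk.length_cons] using hi)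
        (by simpa [Walk.length_cons] using hj)
        (by simpa [Walk.getVert_cons_succ] using hij)
      omega

/-- Splitting the canonical path at one of its vertices. -/
lemma tP_split (hT : T.IsTree) {s t v : V} (hv : v ∈ (tP hT s t).support) :
    tP hT s t = (tP hT s v).append (tP hT v t) := by
  classical
  have h1 : (tP hT s t).takeUntil v hv = tP hT s v :=
    tP_unique hT ((tP_isPath hT s t).takeUntil hv)
  have h2 : (tP hT s t).dropUntil v hv = tP hT v t :=
    tP_unique hT ((tP_isPath hT s t).dropUntil hv)
  calc tP hT s t = ((tP hT s t).takeUntil v hv).append ((tP hT s t).dropUntil v hv) :=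
        (Walk.take_spec _ hv).symm
    _ = (tP hT s v).append (tP hT v t) := by rw [h1, h2]

lemma tP_split_length (hT : T.IsTree) {s t v : V} (hv : v ∈ (tP hT s t).support) :
    (tP hT s t).length = (tP hT s v).length + (tP hT v t).length := by
  rw [tP_split hT hv, Walk.length_append]

variable (hT : T.IsTree) (z : V)
include hT

lemma anc_iff {x y : V} : Ancestor T z x y ↔ x ∈ (tP hT z y).support := by
  constructor
  · rintro ⟨p, hp, hx⟩; rwa [tP_unique hT hp] at hx
  · intro h; exact ⟨tP hT z y, tP_isPath hT z y, h⟩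

lemma anc_refl (x : V) : Ancestor T z x x :=
  ⟨tP hT z x, tP_isPath hT z x, Walk.end_mem_support _⟩

lemma anc_length {s t : V} (h : Ancestor T z s t) :
    (tP hT z t).length = (tP hT z s).length + (tP hT s t).length :=
  tP_split_length hT ((anc_iff hT z).1 h)

lemma anc_trans {x y w : V} (h1 : Ancestor T z x y) (h2 : Ancestor T z y w) :
    Ancestor T z x w := by
  rw [anc_iff hT z] at h1 ⊢
  rw [tP_split hT ((anc_iff hT z).1 h2), Walk.mem_support_append_iff]
  exact Or.inl h1

lemma anc_mem_of_anc {s t v : V} (h : Ancestor T z s t) (hv : v ∈ (tP hT s t).support) :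
    Ancestor T z v t := by
  rw [anc_iff hT z, tP_split hT ((anc_iff hT z).1 h), Walk.mem_support_append_iff]
  exact Or.inr hv

lemma anc_antisymm {s t : V} (h1 : Ancestor T z s t) (h2 : Ancestor T z t s) : s = t := by
  have l1 := anc_length hT z h1
  have l2 := anc_length hT z h2
  exact Walk.eq_of_length_eq_zero (show (tP hT s t).length = 0 by omega)

lemma anc_eq_of_len {a b : V} (h : Ancestor T z a b)
    (hl : (tP hT z b).length ≤ (tP hT z a).length) : a = b := by
  have := anc_length hT z h
  exact Walk.eq_of_length_eq_zero (show (tP hT a b).length = 0 by omega)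

lemma adj_anc {v w : V} (h : T.Adj v w) : Ancestor T z v w ∨ Ancestor T z w v := by
  by_cases hw : w ∈ (tP hT z v).support
  · exact Or.inr ⟨_, tP_isPath hT z v, hw⟩
  · left
    refine ⟨(tP hT z v).concat h, ?_, ?_⟩
    · apply Walk.IsPath.mk'
      rw [Walk.support_concat]
      simp only [List.concat_eq_append, List.nodup_append, List.nodup_cons, List.not_mem_nil,
        not_false_iff, List.nodup_nil, and_true, true_and, List.disjoint_singleton]
      exact ⟨(tP_isPath hT z v).support_nodup, by intro a ha b hb hab; rw [List.mem_singleton] at hb; subst hb; exact hw (hab ▸ ha)⟩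
    · rw [Walk.support_concat, List.mem_append]
      exact Or.inl (Walk.end_mem_support _)

lemma child_length {n v : V} (hadj : T.Adj n v) (h : Ancestor T z n v) :
    (tP hT z v).length = (tP hT z n).length + 1 := by
  have hp : (Walk.cons hadj Walk.nil).IsPath := by
    rw [Walk.cons_isPath_iff]
    exact ⟨Walk.IsPath.nil, by simp [hadj.ne]⟩
  have h1 : (tP hT n v).length = 1 := by
    rw [← tP_unique hT hp]; rfl
  have := anc_length hT z h
  omega

lemma anc_comparable {p q r : V} (h1 : Ancestor T z p q) (h2 : Ancestor T z r q) :
    Ancestor T z p r ∨ Ancestor T z r p := by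
  by_cases hrp : Ancestor T z r p
  · exact Or.inr hrp
  by_cases hpr : Ancestor T z p r
  · exact Or.inl hpr
  exfalso
  have hp : p ∈ (tP hT z q).support := (anc_iff hT z).1 h1
  have hr : r ∈ (tP hT z q).support := (anc_iff hT z).1 h2
  have hr' : r ∈ (tP hT p q).support := by
    rw [tP_split hT hp, Walk.mem_support_append_iff] at hr
    rcases hr with h | h
    · exact absurd ⟨_, tP_isPath hT z p, h⟩ hrp
    · exact h
  have hp' : p ∈ (tP hT r q).support := by
    rw [tP_split hT hr, Walk.mem_support_append_iff] at hp
    rcases hp with h | h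
    · exact absurd ⟨_, tP_isPath hT z r, h⟩ hpr
    · exact h
  have l1 := tP_split_length hT hr'
  have l2 := tP_split_length hT hp'
  have : (tP hT p r).length = 0 := by omega
  exact hpr (Walk.eq_of_length_eq_zero this ▸ anc_refl hT z p)

lemma adj_anc_unique {v n1 n2 : V} (ha1 : T.Adj n1 v) (h1 : Ancestor T z n1 v)
    (ha2 : T.Adj n2 v) (h2 : Ancestor T z n2 v) : n1 = n2 := by
  have c1 := child_length hT z ha1 h1
  have c2 := child_length hT z ha2 h2
  rcases anc_comparable hT z h1 h2 with h | h
  · exact anc_eq_of_len hT z h (by omega)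
  · exact (anc_eq_of_len hT z h (by omega)).symm

lemma descend {s : V} : ∀ {n t : V} (q : T.Walk n t), q.IsPath → Ancestor T z s n →
    s ∉ q.support → Ancestor T z s t := by
  intro n t q
  induction q with
  | nil => intro _ h _; exact h
  | @cons n m t hadj q ih =>
    intro hq hsn hs
    rw [Walk.cons_isPath_iff] at hq
    have hsq : s ∉ q.support := by
      intro hx; exact hs (by rw [Walk.support_cons]; exact List.mem_cons_of_mem _ hx)
    have hsm : Ancestor T z s m := by
      rcases adj_anc hT z hadj with h | h
      · exact anc_trans hT z hsn h
      · rcases anc_comparable hT z hsn h with h' | h'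
        · exact h'
        · exfalso
          have hmn : (tP hT z n).length = (tP hT z m).length + 1 :=
            child_length hT z hadj.symm h
          have hsnne : s ≠ n := by
            intro he; exact hs (by rw [he]; exact Walk.start_mem_support _)
          have hsmne : m ≠ s := by
            intro he; exact hsq (he ▸ Walk.start_mem_support q)
          have l1 := anc_length hT z hsn
          have l2 := anc_length hT z h'
          have p1 := tP_length_pos hT hsnne
          have p2 := tP_length_pos hT hsmne
          omega
    exact ih hq.1 hsm hsq

lemma anc_getVert_one {s t : V} (h : Ancestor T z s t) (hne : s ≠ t) :
    Ancestor T z s ((tP hT s t).getVert 1) ∧ Ancestor T z ((tP hT s t).getVert 1) t := by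
  set p := tP hT s t with hp
  have hlen : 1 ≤ p.length := tP_length_pos hT hne
  have hnn : ¬ p.Nil := by rw [Walk.not_nil_iff_lt_length]; omega
  have hadj : T.Adj s (p.getVert 1) := by
    have := Walk.adj_getVert_succ p (show 0 < p.length by omega)
    simpa [Walk.getVert_zero] using this
  have hmem : p.getVert 1 ∈ p.support :=
    Walk.mem_support_iff_exists_getVert.2 ⟨1, rfl, hlen⟩
  have hnt : Ancestor T z (p.getVert 1) t := anc_mem_of_anc hT z h hmem
  refine ⟨?_, hnt⟩
  rcases adj_anc hT z hadj with h1 | h1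
  · exact h1
  · exfalso
    have htail : p.tail.IsPath := (tP_isPath hT s t).tail
    have et : p.tail = tP hT (p.getVert 1) t := tP_unique hT htail
    have ltail : p.tail.length + 1 = p.length := Walk.length_tail_add_one hnn
    have l1 := anc_length hT z h
    have l2 := anc_length hT z hnt
    have l3 := child_length hT z hadj.symm h1
    rw [← et] at l2
    rw [← hp] at l1
    omega

lemma getVert_one_eq_parent {s t s1 : V} (hadj : T.Adj s s1) (hanc : Ancestor T z s1 s)
    (hnot : ¬ Ancestor T z s t) : (tP hT s t).getVert 1 = s1 := by
  have hne : s ≠ t := by rintro rfl; exact hnot (anc_refl hT z s)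
  set p := tP hT s t with hp
  have hlen : 1 ≤ p.length := tP_length_pos hT hne
  have hnn : ¬ p.Nil := by rw [Walk.not_nil_iff_lt_length]; omega
  have hadj' : T.Adj s (p.getVert 1) := by
    have := Walk.adj_getVert_succ p (show 0 < p.length by omega)
    simpa [Walk.getVert_zero] using this
  rcases adj_anc hT z hadj' with h1 | h1
  · exfalso
    apply hnot
    have hstail : s ∉ p.tail.support := by
      intro hx
      have hsup : p.support = s :: p.tail.support := by
        conv_lhs => rw [← Walk.cons_tail_eq p hnn]
        rw [Walk.support_cons]
      have hnd := (tP_isPath hT s t).support_nodup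
      rw [show (tP hT s t) = p from rfl] at hnd
      rw [hsup, List.nodup_cons] at hnd
      exact hnd.1 hx
    exact descend hT z p.tail ((tP_isPath hT s t).tail) h1 hstail
  · exact adj_anc_unique hT z hadj'.symm h1 hadj.symm hanc

lemma getVert_one_eq_child {s t s1 : V} (hadj : T.Adj s s1) (hanc : Ancestor T z s s1)
    (h1t : Ancestor T z s1 t) : (tP hT s t).getVert 1 = s1 := by
  have hst : Ancestor T z s t := anc_trans hT z hanc h1t
  have hne : s ≠ t := by rintro rfl; exact hadj.ne (anc_antisymm hT z hanc h1t)
  obtain ⟨h1, h2⟩ := anc_getVert_one hT z hst hne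
  have hadj' : T.Adj s ((tP hT s t).getVert 1) := by
    have := Walk.adj_getVert_succ (tP hT s t) (show 0 < (tP hT s t).length from
      tP_length_pos hT hne)
    simpa [Walk.getVert_zero] using this
  have c1 := child_length hT z hadj' h1
  have c2 := child_length hT z hadj hanc
  rcases anc_comparable hT z h2 h1t with h | h
  · exact anc_eq_of_len hT z h (by omega)
  · exact (anc_eq_of_len hT z h (by omega)).symm

end TreeAux


section RequestAux

open SimpleGraph Walk

variable {V : Type*} {T : SimpleGraph V} (hT : T.IsTree) (z : V)
include hT

lemma chain_up {s t : V} (W : T.Walk s t)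
    (H : ∀ i < W.length, Ancestor T z (W.getVert (i+1)) (W.getVert i)) :
    ∀ i j, i ≤ j → j ≤ W.length → Ancestor T z (W.getVert j) (W.getVert i) := by
  intro i j hij
  induction j, hij using Nat.le_induction with
  | base => intro _; exact anc_refl hT z _
  | succ j hij ih => intro hj; exact anc_trans hT z (H j (by omega)) (ih (by omega))

lemma chain_down {s t : V} (W : T.Walk s t)
    (H : ∀ i < W.length, Ancestor T z (W.getVert i) (W.getVert (i+1))) :
    ∀ i j, i ≤ j → j ≤ W.length → Ancestor T z (W.getVert i) (W.getVert j) := by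
  intro i j hij
  induction j, hij using Nat.le_induction with
  | base => intro _; exact anc_refl hT z _
  | succ j hij ih => intro hj; exact anc_trans hT z (ih (by omega)) (H j (by omega))

lemma down_propagate {s t : V} {W : T.Walk s t} (hWp : W.IsPath) {i : ℕ}
    (hd : Ancestor T z (W.getVert i) (W.getVert (i+1))) :
    ∀ j, i ≤ j → j < W.length → Ancestor T z (W.getVert j) (W.getVert (j+1)) := by
  intro j hij
  induction j, hij using Nat.le_induction with
  | base => intro _; exact hd
  | succ j hij ih =>
    intro hj
    have hj' : j < W.length := by omega
    have hdj := ih hj'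
    rcases adj_anc hT z (Walk.adj_getVert_succ W hj) with h | h
    · exact h
    · exfalso
      have heq : W.getVert j = W.getVert (j+2) :=
        adj_anc_unique hT z (Walk.adj_getVert_succ W hj') hdj
          (Walk.adj_getVert_succ W hj).symm h
      have := path_getVert_inj W hWp j (j+2) (by omega) (by omega) heq
      omega

lemma unimodal_first_last {r : Request T} (hv : Unimodal T z r) :
    Ancestor T z r.sPlus r.s ∧ Ancestor T z r.tMinus r.t := by
  obtain ⟨hnc, hnd⟩ := hv
  have hlen := r.one_le_length
  have hWp := r.isPath
  constructor
  · by_contra h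
    apply hnd
    intro i hi
    have hd0 : Ancestor T z (r.toWalk.getVert 0) (r.toWalk.getVert 1) := by
      rcases adj_anc hT z (Walk.adj_getVert_succ r.toWalk (i := 0) (by omega)) with h' | h'
      · exact h'
      · exfalso
        apply h
        rw [Walk.getVert_zero] at h'
        exact h'
    exact down_propagate hT z hWp hd0 i (by omega) hi
  · by_contra h
    apply hnc
    intro i hi
    rcases adj_anc hT z (Walk.adj_getVert_succ r.toWalk hi) with h' | h'
    · exfalso
      have hP := down_propagate hT z hWp h' (r.toWalk.length - 1) (by omega) (by omega)
      apply h
      rw [show r.toWalk.length - 1 + 1 = r.toWalk.length from by omega,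
        Walk.getVert_length] at hP
      exact hP
    · exact h'

lemma unimodal_not_related {r : Request T} (hv : Unimodal T z r) :
    ¬ Ancestor T z r.s r.t ∧ ¬ Ancestor T z r.t r.s := by
  obtain ⟨h1, h2⟩ := unimodal_first_last hT z hv
  have hW : r.toWalk = tP hT r.s r.t := tP_unique hT r.isPath
  have hlen := r.one_le_length
  have hne : r.s ≠ r.t := by
    intro he
    have h0 : r.toWalk.getVert 0 = r.toWalk.getVert r.toWalk.length := by
      rw [Walk.getVert_zero, Walk.getVert_length, he]
    have := path_getVert_inj r.toWalk r.isPath 0 r.toWalk.length (by omega) le_rfl h0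
    omega
  constructor
  · intro h
    obtain ⟨hup, _⟩ := anc_getVert_one hT z h hne
    have heq : r.s = r.toWalk.getVert 1 := by
      refine anc_antisymm hT z ?_ h1
      rw [hW]; exact hup
    have hadj : T.Adj (r.toWalk.getVert 0) (r.toWalk.getVert 1) :=
      Walk.adj_getVert_succ _ (by omega)
    rw [Walk.getVert_zero] at hadj
    exact hadj.ne heq
  · intro h
    obtain ⟨hup, _⟩ := anc_getVert_one hT z h hne.symm
    have heq : r.t = r.toWalk.getVert (r.toWalk.length - 1) := by
      refine anc_antisymm hT z ?_ h2
      rw [hW, tP_getVert_pred hT]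
      exact hup
    have hadj : T.Adj (r.toWalk.getVert (r.toWalk.length - 1))
        (r.toWalk.getVert (r.toWalk.length - 1 + 1)) :=
      Walk.adj_getVert_succ _ (by omega)
    rw [show r.toWalk.length - 1 + 1 = r.toWalk.length from by omega,
      Walk.getVert_length] at hadj
    exact hadj.ne heq.symm

lemma interferesOn_of_tP {r r' : Request T}
    (hne : r.s ≠ r'.t)
    (h1 : (tP hT r.s r'.t).getVert 1 = r.sPlus)
    (h2 : (tP hT r.s r'.t).getVert ((tP hT r.s r'.t).length - 1) = r'.tMinus) :
    InterferesOn T r r' :=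
  ⟨tP hT r.s r'.t, tP_isPath hT _ _, tP_length_pos hT hne, h1, h2⟩

end RequestAux

/-- Lemma 5: given a converging, a diverging and a unimodal request,
two of them interfere. -/
theorem two_of_three_interfere {V : Type*} (T : SimpleGraph V) (hT : T.IsTree)
    (z : V) (rm rp rv : Request T)
    (hm : Converging T z rm) (hp : Diverging T z rp) (hv : Unimodal T z rv) :
    Interfere T rm rp ∨ Interfere T rm rv ∨ Interfere T rp rv := by
  by_contra hcon
  push_neg at hcon
  obtain ⟨hI1, hI2, hI3⟩ := hcon
  simp only [Interfere, not_or] at hI1 hI2 hI3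
  have hlm := rm.one_le_length
  have hlp := rp.one_le_length
  -- facts about the converging request rm
  have hm0 : Ancestor T z rm.sPlus rm.s := by
    have h := hm 0 (by omega)
    rw [Walk.getVert_zero] at h
    exact h
  have hmadj0 : T.Adj rm.s rm.sPlus := by
    have h := Walk.adj_getVert_succ rm.toWalk (show 0 < rm.toWalk.length by omega)
    rw [Walk.getVert_zero] at h
    exact h
  have hmlast : Ancestor T z rm.t rm.tMinus := by
    have h := hm (rm.toWalk.length - 1) (by omega)
    rw [show rm.toWalk.length - 1 + 1 = rm.toWalk.length from by omega,
      Walk.getVert_length] at h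
    exact h
  have hmadjl : T.Adj rm.tMinus rm.t := by
    have h := Walk.adj_getVert_succ rm.toWalk
      (show rm.toWalk.length - 1 < rm.toWalk.length by omega)
    rw [show rm.toWalk.length - 1 + 1 = rm.toWalk.length from by omega,
      Walk.getVert_length] at h
    exact h
  have hmdu : Ancestor T z rm.tMinus rm.s := by
    have h := chain_up hT z rm.toWalk hm 0 (rm.toWalk.length - 1) (by omega) (by omega)
    rw [Walk.getVert_zero] at h
    exact h
  -- facts about the diverging request rp
  have hp0 : Ancestor T z rp.s rp.sPlus := by
    have h := hp 0 (by omega)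
    rw [Walk.getVert_zero] at h
    exact h
  have hpadj0 : T.Adj rp.s rp.sPlus := by
    have h := Walk.adj_getVert_succ rp.toWalk (show 0 < rp.toWalk.length by omega)
    rw [Walk.getVert_zero] at h
    exact h
  have hplast : Ancestor T z rp.tMinus rp.t := by
    have h := hp (rp.toWalk.length - 1) (by omega)
    rw [show rp.toWalk.length - 1 + 1 = rp.toWalk.length from by omega,
      Walk.getVert_length] at h
    exact h
  have hpadjl : T.Adj rp.tMinus rp.t := by
    have h := Walk.adj_getVert_succ rp.toWalk
      (show rp.toWalk.length - 1 < rp.toWalk.length by omega)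
    rw [show rp.toWalk.length - 1 + 1 = rp.toWalk.length from by omega,
      Walk.getVert_length] at h
    exact h
  have hpcy : Ancestor T z rp.sPlus rp.t := by
    have h := chain_down hT z rp.toWalk hp 1 rp.toWalk.length (by omega) le_rfl
    rw [Walk.getVert_length] at h
    exact h
  -- facts about the unimodal request rv
  obtain ⟨hva, hvb⟩ := unimodal_first_last hT z hv
  have hvadj0 : T.Adj rv.s rv.sPlus := by
    have h := Walk.adj_getVert_succ rv.toWalk
      (show 0 < rv.toWalk.length by have := rv.one_le_length; omega)
    rw [Walk.getVert_zero] at h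
    exact h
  have hvadjl : T.Adj rv.tMinus rv.t := by
    have hlv := rv.one_le_length
    have h := Walk.adj_getVert_succ rv.toWalk
      (show rv.toWalk.length - 1 < rv.toWalk.length by omega)
    rw [show rv.toWalk.length - 1 + 1 = rv.toWalk.length from by omega,
      Walk.getVert_length] at h
    exact h
  obtain ⟨hab1, hab2⟩ := unimodal_not_related hT z hv
  -- the three consequences of non-interference
  have F1 : Ancestor T z rm.s rp.t ∨ Ancestor T z rp.t rm.s := by
    by_contra hF
    push_neg at hF
    refine hI1.1 (interferesOn_of_tP hT ?_ ?_ ?_)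
    · intro he; exact hF.1 (by rw [he]; exact anc_refl hT z rp.t)
    · exact getVert_one_eq_parent hT z hmadj0 hm0 hF.1
    · rw [tP_getVert_pred hT]
      exact getVert_one_eq_parent hT z hpadjl.symm hplast hF.2
  have F2a : Ancestor T z rm.s rv.t ∨ Ancestor T z rv.t rm.s := by
    by_contra hF
    push_neg at hF
    refine hI2.1 (interferesOn_of_tP hT ?_ ?_ ?_)
    · intro he; exact hF.1 (by rw [he]; exact anc_refl hT z rv.t)
    · exact getVert_one_eq_parent hT z hmadj0 hm0 hF.1
    · rw [tP_getVert_pred hT]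
      exact getVert_one_eq_parent hT z hvadjl.symm hvb hF.2
  have F2b : ¬ Ancestor T z rm.tMinus rv.s := by
    intro hda
    apply hI2.2
    have hnaw : ¬ Ancestor T z rv.s rm.t := by
      intro haw
      have hwa : Ancestor T z rm.t rv.s := anc_trans hT z hmlast hda
      have he : rv.s = rm.t := anc_antisymm hT z haw hwa
      have he2 : rm.tMinus = rm.t := anc_antisymm hT z (by rw [← he]; exact hda) hmlast
      exact hmadjl.ne he2
    refine interferesOn_of_tP hT ?_ ?_ ?_
    · intro he; exact hnaw (by rw [he]; exact anc_refl hT z rm.t)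
    · exact getVert_one_eq_parent hT z hvadj0 hva hnaw
    · rw [tP_getVert_pred hT]
      exact getVert_one_eq_child hT z hmadjl.symm hmlast hda
  have F3a : ¬ Ancestor T z rp.sPlus rv.t := by
    intro hcb
    apply hI3.1
    have hnbx : ¬ Ancestor T z rv.t rp.s := by
      intro hbx
      have hxb : Ancestor T z rp.s rv.t := anc_trans hT z hp0 hcb
      have he : rp.s = rv.t := anc_antisymm hT z hxb hbx
      have he2 : rp.s = rp.sPlus := anc_antisymm hT z hp0 (by rw [he]; exact hcb)
      exact hpadj0.ne he2
    refine interferesOn_of_tP hT ?_ ?_ ?_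
    · intro he
      have he2 : rp.s = rp.sPlus := anc_antisymm hT z hp0 (by rw [he]; exact hcb)
      exact hpadj0.ne he2
    · exact getVert_one_eq_child hT z hpadj0 hp0 hcb
    · rw [tP_getVert_pred hT]
      exact getVert_one_eq_parent hT z hvadjl.symm hvb hnbx
  have F3b : Ancestor T z rv.s rp.t ∨ Ancestor T z rp.t rv.s := by
    by_contra hF
    push_neg at hF
    refine hI3.2 (interferesOn_of_tP hT ?_ ?_ ?_)
    · intro he; exact hF.1 (by rw [he]; exact anc_refl hT z rp.t)
    · exact getVert_one_eq_parent hT z hvadj0 hva hF.1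
    · rw [tP_getVert_pred hT]
      exact getVert_one_eq_parent hT z hpadjl.symm hplast hF.2
  -- final case analysis
  rcases F2a with hub | hbu
  · rcases F1 with huy | hyu
    · rcases F3b with hay | hya
      · have hdy : Ancestor T z rm.tMinus rp.t := anc_trans hT z hmdu huy
        rcases anc_comparable hT z hdy hay with h | h
        · exact F2b h
        · exact hab1 (anc_trans hT z (anc_trans hT z h hmdu) hub)
      · exact F2b (anc_trans hT z (anc_trans hT z hmdu huy) hya)
    · exact F3a (anc_trans hT z (anc_trans hT z hpcy hyu) hub)
  · rcases F1 with huy | hyu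
    · have hby : Ancestor T z rv.t rp.t := anc_trans hT z hbu huy
      rcases F3b with hay | hya
      · rcases anc_comparable hT z hay hby with h | h
        · exact hab1 h
        · exact hab2 h
      · exact hab2 (anc_trans hT z hby hya)
    · rcases anc_comparable hT z hyu hbu with h | h
      · exact F3a (anc_trans hT z hpcy h)
      · rcases F3b with hay | hya
        · rcases anc_comparable hT z hay h with h' | h'
          · exact hab1 h'
          · exact hab2 h'
        · exact hab2 (anc_trans hT z h hya)
end

section
/- Let R be a set of requests on a bidirected tree T rooted at a vertex z, with R^-, R^+, R^∨ the sets of converging, diverging and unimodal requests of R. Then χ(R,T) ≤ ω(R^+,T) + ω(R^-,T) + ω(R^∨,T) ≤ 2·χ(R,T). -/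
open SimpleGraph

variable {V : Type*}

namespace L10

open SimpleGraph Walk

variable {V : Type*} [DecidableEq V] {T : SimpleGraph V}

lemma getVert_injOn {u v : V} {p : T.Walk u v} (hp : p.IsPath) :
    ∀ i, i ≤ p.length → ∀ j, j ≤ p.length → p.getVert i = p.getVert j → i = j := by
  induction p with
  | nil => simp
  | @cons u x v h q ih =>
    rw [Walk.cons_isPath_iff] at hp
    intro i hi j hj hij
    match i, j with
    | 0, 0 => rfl
    | 0, j+1 =>
      exfalso
      apply hp.2
      rw [Walk.getVert_zero, Walk.getVert_cons_succ] at hij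
      exact Walk.mem_support_iff_exists_getVert.mpr ⟨j, hij.symm, by
        simpa [Walk.length_cons] using hj⟩
    | i+1, 0 =>
      exfalso
      apply hp.2
      rw [Walk.getVert_zero, Walk.getVert_cons_succ] at hij
      exact Walk.mem_support_iff_exists_getVert.mpr ⟨i, hij, by
        simpa [Walk.length_cons] using hi⟩
    | i+1, j+1 =>
      rw [Walk.getVert_cons_succ, Walk.getVert_cons_succ] at hij
      have := ih hp.1 i (by simpa [Walk.length_cons] using hi) j
        (by simpa [Walk.length_cons] using hj) hij
      omega

lemma length_eq_dist (hT : T.IsTree) {u v : V} (p : T.Walk u v) (hp : p.IsPath) :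
    p.length = T.dist u v := by
  refine le_antisymm ?_ (SimpleGraph.dist_le p)
  obtain ⟨w, hw⟩ := hT.isConnected.exists_walk_length_eq_dist u v
  have hb : w.bypass.IsPath := Walk.bypass_isPath w
  have : p = w.bypass := by
    obtain ⟨q, hq, huniq⟩ := hT.existsUnique_path u v
    rw [huniq p hp, huniq w.bypass hb]
  rw [this]
  calc w.bypass.length ≤ w.length := Walk.length_bypass_le w
    _ = T.dist u v := hw

/-- `x` is an ancestor of `y` (both seen from root `z`), metric version. -/
def Anc (T : SimpleGraph V) (z x y : V) : Prop :=
  T.dist z x + T.dist x y = T.dist z y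

lemma anc_refl (hT : T.IsTree) (z x : V) : Anc T z x x := by
  simp [Anc, (hT.isConnected.dist_eq_zero_iff (u := x) (v := x)).mpr rfl]

lemma anc_root (hT : T.IsTree) (z x : V) : Anc T z z x := by
  simp [Anc, (hT.isConnected.dist_eq_zero_iff (u := z) (v := z)).mpr rfl]

lemma anc_trans (hT : T.IsTree) {z x y w : V} (h1 : Anc T z x y) (h2 : Anc T z y w) :
    Anc T z x w := by
  unfold Anc at *
  have t1 : T.dist z w ≤ T.dist z x + T.dist x w := hT.isConnected.dist_triangle
  have t2 : T.dist x w ≤ T.dist x y + T.dist y w := hT.isConnected.dist_triangle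
  have t3 : T.dist z y ≤ T.dist z x + T.dist x y := hT.isConnected.dist_triangle
  omega

lemma anc_antisymm (hT : T.IsTree) {z x y : V} (h1 : Anc T z x y) (h2 : Anc T z y x) :
    x = y := by
  unfold Anc at *
  have hc := T.dist_comm (u := x) (v := y)
  have hxy : T.dist x y = 0 := by omega
  exact (hT.isConnected.dist_eq_zero_iff).mp hxy

lemma anc_dist_le {z x y : V} (h : Anc T z x y) : T.dist z x ≤ T.dist z y := by
  unfold Anc at h; omega

lemma anc_dist_lt (hT : T.IsTree) {z x y : V} (h : Anc T z x y) (hne : x ≠ y) :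
    T.dist z x < T.dist z y := by
  have h0 : T.dist x y ≠ 0 := fun h0 => hne ((hT.isConnected.dist_eq_zero_iff).mp h0)
  unfold Anc at h; omega

/-- membership in a path implies the metric splitting -/
lemma dist_add_of_mem_path (hT : T.IsTree) {u v x : V} {p : T.Walk u v} (hp : p.IsPath)
    (hx : x ∈ p.support) : T.dist u x + T.dist x v = T.dist u v := by
  have h1 : (p.takeUntil x hx).length = T.dist u x :=
    length_eq_dist hT _ (hp.takeUntil hx)
  have h2 : (p.dropUntil x hx).length = T.dist x v :=
    length_eq_dist hT _ (hp.dropUntil hx)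
  have h3 : (p.takeUntil x hx).length + (p.dropUntil x hx).length = p.length := by
    rw [← Walk.length_append, Walk.take_spec]
  rw [length_eq_dist hT p hp] at h3
  omega

/-- the canonical path between two vertices -/
noncomputable def pth (hT : T.IsTree) (u v : V) : T.Walk u v :=
  ((hT.isConnected.preconnected u v).some).bypass

lemma pth_isPath (hT : T.IsTree) (u v : V) : (pth hT u v).IsPath := Walk.bypass_isPath _

lemma pth_length (hT : T.IsTree) (u v : V) : (pth hT u v).length = T.dist u v :=
  length_eq_dist hT _ (pth_isPath hT u v)

/-- gluing two paths that satisfy the metric identity gives a path -/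
lemma isPath_append (hT : T.IsTree) {u x y : V} {p : T.Walk u x} {q : T.Walk x y}
    (hp : p.IsPath) (hq : q.IsPath) (hd : T.dist u x + T.dist x y = T.dist u y) :
    (p.append q).IsPath := by
  rw [Walk.isPath_def, Walk.support_append]
  refine List.Nodup.append (by exact hp.support_nodup) ?_ ?_
  · have := hq.support_nodup
    exact this.tail
  · -- disjointness: a vertex in both p.support and q.support.tail
    intro a ha ha'
    have haq : a ∈ q.support := List.mem_of_mem_tail ha'
    have h1 := dist_add_of_mem_path hT hp ha
    have h2 := dist_add_of_mem_path hT hq haq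
    have t1 : T.dist u y ≤ T.dist u a + T.dist a y := hT.isConnected.dist_triangle
    have hxa : T.dist x a = 0 := by
      have hc1 := T.dist_comm (u := a) (v := x)
      omega
    have hax : a = x := by
      have := (hT.isConnected.dist_eq_zero_iff (u := x) (v := a)).mp hxa
      exact this.symm
    subst hax
    -- a = x cannot be in q.support.tail since q is a path starting at x... 
    have := hq.support_nodup
    have hhead : q.support = a :: q.support.tail := by
      rw [Walk.support_eq_cons]; rfl
    rw [hhead] at this
    exact (List.nodup_cons.mp this).1 ha'

lemma anc_iff (hT : T.IsTree) {z x y : V} : Ancestor T z x y ↔ Anc T z x y := by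
  constructor
  · rintro ⟨p, hp, hx⟩
    exact dist_add_of_mem_path hT hp hx
  · intro h
    refine ⟨(pth hT z x).append (pth hT x y), isPath_append hT (pth_isPath _ _ _)
      (pth_isPath _ _ _) h, ?_⟩
    rw [Walk.mem_support_append_iff]
    left
    exact Walk.end_mem_support _

end L10

namespace L10
section
set_option linter.unusedSectionVars false

variable {V : Type*} [DecidableEq V] {T : SimpleGraph V}

lemma mem_pth (hT : T.IsTree) {z x y : V} :
    Anc T z x y ↔ x ∈ (pth hT z y).support := by
  rw [← anc_iff hT]
  constructor
  · rintro ⟨p, hp, hx⟩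
    obtain ⟨q, hq, huniq⟩ := hT.existsUnique_path z y
    rw [huniq p hp] at hx
    rw [huniq (pth hT z y) (pth_isPath hT z y)]
    exact hx
  · intro h
    exact ⟨pth hT z y, pth_isPath hT z y, h⟩

lemma anc_total (hT : T.IsTree) {z x y w : V} (hx : Anc T z x w) (hy : Anc T z y w) :
    Anc T z x y ∨ Anc T z y x := by
  have hxm := (mem_pth hT).mp hx
  have hym := (mem_pth hT).mp hy
  set P := pth hT z w with hP
  have hsupp : P.support = (P.takeUntil y hym).support ++ (P.dropUntil y hym).support.tail := by
    rw [← Walk.support_append, Walk.take_spec]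
  rw [hsupp] at hxm
  rcases List.mem_append.mp hxm with h | h
  · left
    exact dist_add_of_mem_path hT ((pth_isPath hT z w).takeUntil hym) h
  · right
    have hxd : x ∈ (P.dropUntil y hym).support := List.mem_of_mem_tail h
    have h2 := dist_add_of_mem_path hT ((pth_isPath hT z w).dropUntil hym) hxd
    unfold Anc at *
    have t1 : T.dist z x ≤ T.dist z y + T.dist y x := hT.isConnected.dist_triangle
    omega

lemma anc_eq_of_dist_eq (hT : T.IsTree) {z x y : V} (h : Anc T z x y)
    (hd : T.dist z x = T.dist z y) : x = y := by
  unfold Anc at h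
  exact (hT.isConnected.dist_eq_zero_iff).mp (by omega)

lemma anc_of_dist_le (hT : T.IsTree) {z x y w : V} (hx : Anc T z x w) (hy : Anc T z y w)
    (hd : T.dist z x ≤ T.dist z y) : Anc T z x y := by
  rcases anc_total hT hx hy with h | h
  · exact h
  · have := anc_dist_le (T := T) (z := z) h
    have : x = y := (anc_eq_of_dist_eq hT h (le_antisymm this hd)).symm
    subst this
    exact anc_refl hT z x

lemma adj_dist (hT : T.IsTree) {u v : V} (h : T.Adj u v) : T.dist u v = 1 := by
  have hp : (Walk.cons h Walk.nil).IsPath := by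
    rw [Walk.isPath_def]
    simp [h.ne]
  have := length_eq_dist hT _ hp
  simpa using this.symm

lemma anc_adj_dep (hT : T.IsTree) {z a b : V} (h : Anc T z a b) (hadj : T.Adj a b) :
    T.dist z b = T.dist z a + 1 := by
  unfold Anc at h
  rw [adj_dist hT hadj] at h
  omega

lemma adj_anc (hT : T.IsTree) (z : V) {u v : V} (h : T.Adj u v) :
    Anc T z u v ∨ Anc T z v u := by
  by_cases hm : u ∈ (pth hT z v).support
  · left; exact (mem_pth hT).mpr hm
  · right
    have hnew : ((pth hT z v).append (Walk.cons h.symm Walk.nil)).IsPath := by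
      rw [Walk.isPath_def, Walk.support_append]
      refine List.Nodup.append (pth_isPath hT z v).support_nodup (by simp) ?_
      intro a ha ha'
      simp at ha'
      subst ha'
      exact hm ha
    have hL := length_eq_dist hT _ hnew
    rw [Walk.length_append, pth_length] at hL
    simp only [Walk.length_cons, Walk.length_nil] at hL
    unfold Anc
    rw [adj_dist hT h.symm] at *
    omega

/-- parent uniqueness -/
lemma parent_unique (hT : T.IsTree) {z x u u' : V} (h1 : Anc T z u x) (ha1 : T.Adj u x)
    (h2 : Anc T z u' x) (ha2 : T.Adj u' x) : u = u' := by
  have d1 := anc_adj_dep hT h1 ha1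
  have d2 := anc_adj_dep hT h2 ha2
  rcases anc_total hT h1 h2 with h | h
  · exact anc_eq_of_dist_eq hT h (by omega)
  · exact (anc_eq_of_dist_eq hT h (by omega)).symm

/-- child-toward uniqueness -/
lemma child_unique (hT : T.IsTree) {z m c c' w : V}
    (h1 : Anc T z m c) (ha1 : T.Adj m c) (hw1 : Anc T z c w)
    (h2 : Anc T z m c') (ha2 : T.Adj m c') (hw2 : Anc T z c' w) : c = c' := by
  have d1 := anc_adj_dep hT h1 ha1
  have d2 := anc_adj_dep hT h2 ha2
  rcases anc_total hT hw1 hw2 with h | h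
  · exact anc_eq_of_dist_eq hT h (by omega)
  · exact (anc_eq_of_dist_eq hT h (by omega)).symm

section Shape

variable (hT : T.IsTree) (z : V) {u v : V} {p : T.Walk u v}
include hT

lemma step_up_or_down (i : ℕ) (hi : i < p.length) :
    Anc T z (p.getVert (i+1)) (p.getVert i) ∨ Anc T z (p.getVert i) (p.getVert (i+1)) := by
  rcases adj_anc hT z (p.adj_getVert_succ hi) with h | h
  · right; exact h
  · left; exact h

lemma not_up_and_down (i : ℕ) (hi : i < p.length)
    (h1 : Anc T z (p.getVert (i+1)) (p.getVert i))
    (h2 : Anc T z (p.getVert i) (p.getVert (i+1))) : False :=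
  (p.adj_getVert_succ hi).ne (anc_antisymm hT h2 h1)

lemma no_down_up (hp : p.IsPath) (i : ℕ) (hi : i + 1 < p.length)
    (hdown : Anc T z (p.getVert i) (p.getVert (i+1)))
    (hup : Anc T z (p.getVert (i+2)) (p.getVert (i+1))) : False := by
  have e : p.getVert i = p.getVert (i+2) :=
    parent_unique hT hdown (p.adj_getVert_succ (by omega))
      hup (p.adj_getVert_succ hi).symm
  have := getVert_injOn hp i (by omega) (i+2) (by omega) e
  omega

lemma walk_shape (hp : p.IsPath) :
    ∃ k ≤ p.length, (∀ i < k, Anc T z (p.getVert (i+1)) (p.getVert i)) ∧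
      (∀ i, k ≤ i → i < p.length → Anc T z (p.getVert i) (p.getVert (i+1))) := by
  classical
  by_cases hdown : ∃ i, i < p.length ∧ Anc T z (p.getVert i) (p.getVert (i+1))
  · set k := Nat.find hdown with hk
    obtain ⟨hk_lt, hk_down⟩ := Nat.find_spec hdown
    refine ⟨k, le_of_lt hk_lt, ?_, ?_⟩
    · intro i hik
      have hi_lt : i < p.length := lt_trans hik hk_lt
      have hnot := Nat.find_min hdown hik
      rcases step_up_or_down hT z i hi_lt with h | h
      · exact h
      · exact absurd ⟨hi_lt, h⟩ hnot
    · intro i hki hil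
      induction i, hki using Nat.le_induction with
      | base => exact hk_down
      | succ n hn ih =>
        have hdn := ih (by omega)
        rcases step_up_or_down hT z (n+1) hil with h | h
        · exact absurd h (fun h' => no_down_up hT z hp n (by omega) hdn h')
        · exact h
  · push_neg at hdown
    refine ⟨p.length, le_refl _, ?_, by intro i h1 h2; omega⟩
    intro i hik
    rcases step_up_or_down hT z i hik with h | h
    · exact h
    · exact absurd h (hdown i hik)

/-- ascending chains -/
lemma chain_up {k : ℕ} (hup : ∀ i < k, Anc T z (p.getVert (i+1)) (p.getVert i)) :
    ∀ i j, i ≤ j → j ≤ k → Anc T z (p.getVert j) (p.getVert i) := by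
  intro i j hij hjk
  induction j, hij using Nat.le_induction with
  | base => exact anc_refl hT z _
  | succ n hn ih =>
    exact anc_trans hT (hup n (by omega)) (ih (by omega))

lemma chain_down {k : ℕ} (hdn : ∀ i, k ≤ i → i < p.length → Anc T z (p.getVert i) (p.getVert (i+1))) :
    ∀ i j, k ≤ i → i ≤ j → j ≤ p.length → Anc T z (p.getVert i) (p.getVert j) := by
  intro i j hki hij hjl
  induction j, hij using Nat.le_induction with
  | base => exact anc_refl hT z _
  | succ n hn ih =>
    exact anc_trans hT (ih (by omega)) (hdn n (by omega) (by omega))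

lemma dep_up {k : ℕ} (hk : k ≤ p.length)
    (hup : ∀ i < k, Anc T z (p.getVert (i+1)) (p.getVert i)) :
    ∀ i ≤ k, T.dist z (p.getVert i) + i = T.dist z u := by
  intro i hik
  induction i with
  | zero => simp [Walk.getVert_zero]
  | succ n ih =>
    have h := hup n (by omega)
    have := anc_adj_dep hT h (p.adj_getVert_succ (by omega)).symm
    have hn := ih (by omega)
    omega

lemma dep_down {k : ℕ} (hk : k ≤ p.length)
    (hdn : ∀ i, k ≤ i → i < p.length → Anc T z (p.getVert i) (p.getVert (i+1))) :
    ∀ j, k ≤ j → j ≤ p.length →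
      T.dist z (p.getVert j) = T.dist z (p.getVert k) + (j - k) := by
  intro j hkj hjl
  induction j, hkj using Nat.le_induction with
  | base => simp
  | succ n hn ih =>
    have h := hdn n (by omega) (by omega)
    have := anc_adj_dep hT h (p.adj_getVert_succ (by omega))
    have hn' := ih (by omega)
    omega

end Shape
end
end L10

namespace L10
section
set_option linter.unusedSectionVars false

variable {V : Type*} [DecidableEq V] {T : SimpleGraph V}

section ShapeDep

variable (hT : T.IsTree) (z : V) {u v : V} {p : T.Walk u v}
include hT

lemma shape_dep (hp : p.IsPath) {k : ℕ} (hk : k ≤ p.length)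
    (hup : ∀ i < k, Anc T z (p.getVert (i+1)) (p.getVert i))
    (hdn : ∀ i, k ≤ i → i < p.length → Anc T z (p.getVert i) (p.getVert (i+1))) :
    (Anc T z u v → k = 0) ∧ (Anc T z v u → k = p.length) := by
  have hL : p.length = T.dist u v := length_eq_dist hT p hp
  have h1 : T.dist z (p.getVert k) + k = T.dist z u := dep_up hT z hk hup k le_rfl
  have h2 : T.dist z (p.getVert p.length) = T.dist z (p.getVert k) + (p.length - k) :=
    dep_down hT z hk hdn p.length hk le_rfl
  rw [Walk.getVert_length] at h2
  have hc : T.dist v u = T.dist u v := T.dist_comm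
  constructor
  · intro h
    unfold Anc at h
    omega
  · intro h
    unfold Anc at h
    omega

end ShapeDep

section Emission

/-- Direction data for requests. -/
def UpEmit (T : SimpleGraph V) (z : V) (r : Request T) : Prop :=
  Anc T z r.sPlus r.s ∧ T.Adj r.s r.sPlus
def DownEmit (T : SimpleGraph V) (z : V) (r : Request T) : Prop :=
  Anc T z r.s r.sPlus ∧ T.Adj r.s r.sPlus
def UpRec (T : SimpleGraph V) (z : V) (r : Request T) : Prop :=
  Anc T z r.t r.tMinus ∧ T.Adj r.tMinus r.t
def DownRec (T : SimpleGraph V) (z : V) (r : Request T) : Prop :=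
  Anc T z r.tMinus r.t ∧ T.Adj r.tMinus r.t

variable (hT : T.IsTree) (z : V) {r r' : Request T}
include hT

/-- M1 analysis -/
lemma interferesOn_up_up_mp (hrec : UpRec T z r') (h : InterferesOn T r r') :
    Anc T z r'.tMinus r.s := by
  obtain ⟨p, hp, hL, h1, h2⟩ := h
  obtain ⟨k, hk, hup, hdn⟩ := walk_shape hT z hp
  have hkL : k = p.length := by
    rcases eq_or_lt_of_le hk with hkL | hklt
    · exact hkL
    · exfalso
      have hdown := hdn (p.length - 1) (by omega) (by omega)
      rw [Nat.sub_add_cancel (show 1 ≤ p.length by omega), h2, Walk.getVert_length] at hdown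
      have hadj := p.adj_getVert_succ (i := p.length - 1) (by omega)
      rw [Nat.sub_add_cancel (show 1 ≤ p.length by omega), h2, Walk.getVert_length] at hadj
      exact hadj.ne (anc_antisymm hT hdown hrec.1)
  have := chain_up hT z hup 0 (p.length - 1) (by omega) (by omega)
  rw [Walk.getVert_zero, h2] at this
  exact this

/-- M1 construction -/
lemma interferesOn_up_up_mpr (hem : UpEmit T z r) (hrec : UpRec T z r')
    (h : Anc T z r'.tMinus r.s) : InterferesOn T r r' := by
  have htt : r'.tMinus ≠ r'.t := hrec.2.ne
  have hts : Anc T z r'.t r.s := anc_trans hT (anc_trans hT hrec.1 (anc_refl hT z _)) h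
  have hlt : T.dist z r'.t < T.dist z r.s :=
    lt_of_lt_of_le (anc_dist_lt hT hrec.1 (Ne.symm htt)) (anc_dist_le h)
  set p := pth hT r.s r'.t with hpdef
  have hp : p.IsPath := pth_isPath hT _ _
  have hL : p.length = T.dist r.s r'.t := pth_length hT _ _
  have hL1 : 1 ≤ p.length := by
    rcases Nat.eq_zero_or_pos p.length with h0 | h0
    · exfalso
      have : r.s = r'.t := by
        have := (hT.isConnected.dist_eq_zero_iff (u := r.s) (v := r'.t)).mp (by omega)
        exact this
      rw [this] at hlt; omega
    · omega
  obtain ⟨k, hk, hup, hdn⟩ := walk_shape hT z hp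
  have hkL : k = p.length := (shape_dep hT z hp hk hup hdn).2 hts
  refine ⟨p, hp, hL1, ?_, ?_⟩
  · -- first vertex
    have hu0 : Anc T z (p.getVert 1) (p.getVert 0) := hup 0 (by omega)
    rw [Walk.getVert_zero] at hu0
    exact parent_unique hT hu0 (by
      have := p.adj_getVert_succ (i := 0) (by omega)
      rw [Walk.getVert_zero] at this
      exact this.symm) hem.1 hem.2.symm
  · -- last vertex
    have hupl : Anc T z (p.getVert p.length) (p.getVert (p.length - 1)) := by
      have := hup (p.length - 1) (by omega)
      rwa [Nat.sub_add_cancel (show 1 ≤ p.length by omega)] at this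
    rw [Walk.getVert_length] at hupl
    have hadjl : T.Adj r'.t (p.getVert (p.length - 1)) := by
      have := p.adj_getVert_succ (i := p.length - 1) (by omega)
      rw [Nat.sub_add_cancel (show 1 ≤ p.length by omega), Walk.getVert_length] at this
      exact this.symm
    have hchain : Anc T z (p.getVert (p.length - 1)) r.s := by
      have := chain_up hT z hup 0 (p.length - 1) (by omega) (by omega)
      rwa [Walk.getVert_zero] at this
    exact child_unique hT hupl hadjl hchain hrec.1 hrec.2.symm h

/-- M2 analysis -/
lemma interferesOn_up_down_mp (hem : UpEmit T z r) (hrec : DownRec T z r')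
    (h : InterferesOn T r r') : ¬ Anc T z r.s r'.t ∧ ¬ Anc T z r'.t r.s := by
  obtain ⟨p, hp, hL, h1, h2⟩ := h
  obtain ⟨k, hk, hup, hdn⟩ := walk_shape hT z hp
  have hd := shape_dep hT z hp hk hup hdn
  -- first step is up, so k ≥ 1
  have hk1 : 1 ≤ k := by
    by_contra h0
    have hdown := hdn 0 (by omega) (by omega)
    rw [Walk.getVert_zero, h1] at hdown
    exact hem.2.ne (anc_antisymm hT hdown hem.1)
  -- last step is down, so k ≤ length - 1
  have hk2 : k ≤ p.length - 1 := by
    by_contra h0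
    have hupl := hup (p.length - 1) (by omega)
    rw [Nat.sub_add_cancel (show 1 ≤ p.length by omega), h2, Walk.getVert_length] at hupl
    exact hrec.2.ne (anc_antisymm hT hrec.1 hupl)
  constructor
  · intro hanc
    have := hd.1 hanc
    omega
  · intro hanc
    have := hd.2 hanc
    omega

/-- M2 construction -/
lemma interferesOn_up_down_mpr (hem : UpEmit T z r) (hrec : DownRec T z r')
    (h1 : ¬ Anc T z r.s r'.t) (h2 : ¬ Anc T z r'.t r.s) : InterferesOn T r r' := by
  set p := pth hT r.s r'.t with hpdef
  have hp : p.IsPath := pth_isPath hT _ _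
  have hL1 : 1 ≤ p.length := by
    rcases Nat.eq_zero_or_pos p.length with h0 | h0
    · exfalso
      have : r.s = r'.t := by
        have h00 : T.dist r.s r'.t = 0 := by rw [← pth_length hT, ← hpdef]; omega
        exact (hT.isConnected.dist_eq_zero_iff).mp h00
      exact h1 (this ▸ anc_refl hT z r.s)
    · omega
  obtain ⟨k, hk, hup, hdn⟩ := walk_shape hT z hp
  have hk1 : 1 ≤ k := by
    rcases Nat.eq_zero_or_pos k with h0 | h0
    · exfalso
      apply h1
      have := chain_down hT z hdn 0 p.length (by omega) (by omega) le_rfl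
      rwa [Walk.getVert_zero, Walk.getVert_length] at this
    · omega
  have hk2 : k ≤ p.length - 1 := by
    by_contra h0
    apply h2
    have hkL : k = p.length := by omega
    have := chain_up hT z hup 0 p.length (by omega) (by omega)
    rwa [Walk.getVert_zero, Walk.getVert_length] at this
  refine ⟨p, hp, hL1, ?_, ?_⟩
  · have hu0 : Anc T z (p.getVert 1) (p.getVert 0) := hup 0 (by omega)
    rw [Walk.getVert_zero] at hu0
    exact parent_unique hT hu0 (by
      have := p.adj_getVert_succ (i := 0) (by omega)
      rw [Walk.getVert_zero] at this
      exact this.symm) hem.1 hem.2.symm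
  · have hdl : Anc T z (p.getVert (p.length - 1)) (p.getVert p.length) := by
      have := hdn (p.length - 1) (by omega) (by omega)
      rwa [Nat.sub_add_cancel (show 1 ≤ p.length by omega)] at this
    rw [Walk.getVert_length] at hdl
    have hadjl : T.Adj (p.getVert (p.length - 1)) r'.t := by
      have := p.adj_getVert_succ (i := p.length - 1) (by omega)
      rwa [Nat.sub_add_cancel (show 1 ≤ p.length by omega), Walk.getVert_length] at this
    exact parent_unique hT hdl hadjl hrec.1 hrec.2

/-- M3 analysis -/
lemma interferesOn_down_down_mp (hem : DownEmit T z r) (h : InterferesOn T r r') :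
    Anc T z r.sPlus r'.t := by
  obtain ⟨p, hp, hL, h1, h2⟩ := h
  obtain ⟨k, hk, hup, hdn⟩ := walk_shape hT z hp
  have hk0 : k = 0 := by
    by_contra h0
    have hu0 := hup 0 (by omega)
    rw [Walk.getVert_zero, h1] at hu0
    exact hem.2.ne (anc_antisymm hT hem.1 hu0)
  have := chain_down hT z hdn 1 p.length (by omega) (by omega) le_rfl
  rwa [h1, Walk.getVert_length] at this

/-- M3 construction -/
lemma interferesOn_down_down_mpr (hem : DownEmit T z r) (hrec : DownRec T z r')
    (h : Anc T z r.sPlus r'.t) : InterferesOn T r r' := by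
  have hst : Anc T z r.s r'.t := anc_trans hT hem.1 h
  have hlt : T.dist z r.s < T.dist z r'.t :=
    lt_of_lt_of_le (anc_dist_lt hT hem.1 hem.2.ne) (anc_dist_le h)
  set p := pth hT r.s r'.t with hpdef
  have hp : p.IsPath := pth_isPath hT _ _
  have hL1 : 1 ≤ p.length := by
    rcases Nat.eq_zero_or_pos p.length with h0 | h0
    · exfalso
      have : r.s = r'.t := by
        have h00 : T.dist r.s r'.t = 0 := by rw [← pth_length hT, ← hpdef]; omega
        exact (hT.isConnected.dist_eq_zero_iff).mp h00
      rw [this] at hlt; omega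
    · omega
  obtain ⟨k, hk, hup, hdn⟩ := walk_shape hT z hp
  have hk0 : k = 0 := (shape_dep hT z hp hk hup hdn).1 hst
  refine ⟨p, hp, hL1, ?_, ?_⟩
  · have hd0 : Anc T z (p.getVert 0) (p.getVert 1) := hdn 0 (by omega) (by omega)
    rw [Walk.getVert_zero] at hd0
    have hadj0 : T.Adj r.s (p.getVert 1) := by
      have := p.adj_getVert_succ (i := 0) (by omega)
      rwa [Walk.getVert_zero] at this
    have hchain : Anc T z (p.getVert 1) r'.t := by
      have := chain_down hT z hdn 1 p.length (by omega) (by omega) le_rfl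
      rwa [Walk.getVert_length] at this
    exact child_unique hT hd0 hadj0 hchain hem.1 hem.2 h
  · have hdl : Anc T z (p.getVert (p.length - 1)) (p.getVert p.length) := by
      have := hdn (p.length - 1) (by omega) (by omega)
      rwa [Nat.sub_add_cancel (show 1 ≤ p.length by omega)] at this
    rw [Walk.getVert_length] at hdl
    have hadjl : T.Adj (p.getVert (p.length - 1)) r'.t := by
      have := p.adj_getVert_succ (i := p.length - 1) (by omega)
      rwa [Nat.sub_add_cancel (show 1 ≤ p.length by omega), Walk.getVert_length] at this
    exact parent_unique hT hdl hadjl hrec.1 hrec.2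

/-- M4 : a down-emitting request never interferes on an up-receiving one. -/
lemma interferesOn_down_up (hem : DownEmit T z r) (hrec : UpRec T z r')
    (h : InterferesOn T r r') : False := by
  obtain ⟨p, hp, hL, h1, h2⟩ := h
  obtain ⟨k, hk, hup, hdn⟩ := walk_shape hT z hp
  have hk0 : k = 0 := by
    by_contra h0
    have hu0 := hup 0 (by omega)
    rw [Walk.getVert_zero, h1] at hu0
    exact hem.2.ne (anc_antisymm hT hem.1 hu0)
  have hdown := hdn (p.length - 1) (by omega) (by omega)
  rw [Nat.sub_add_cancel (show 1 ≤ p.length by omega), h2, Walk.getVert_length] at hdown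
  exact hrec.2.ne (anc_antisymm hT hdown hrec.1)

end Emission
end
end L10

namespace L10
section
set_option linter.unusedSectionVars false

variable {V : Type*} [DecidableEq V] {T : SimpleGraph V}

section Typed

variable (hT : T.IsTree) (z : V) {r r' : Request T}
include hT

lemma conv_steps (h : Converging T z r) :
    ∀ i < r.toWalk.length, Anc T z (r.toWalk.getVert (i+1)) (r.toWalk.getVert i) :=
  fun i hi => (anc_iff hT).mp (h i hi)

lemma div_steps (h : Diverging T z r) :
    ∀ i < r.toWalk.length, Anc T z (r.toWalk.getVert i) (r.toWalk.getVert (i+1)) :=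
  fun i hi => (anc_iff hT).mp (h i hi)

lemma req_adj_first : T.Adj r.s r.sPlus := by
  have := r.toWalk.adj_getVert_succ (i := 0) (by have := r.one_le_length; omega)
  rwa [Walk.getVert_zero] at this

lemma req_adj_last : T.Adj r.tMinus r.t := by
  have h1 := r.one_le_length
  have := r.toWalk.adj_getVert_succ (i := r.toWalk.length - 1) (by omega)
  rwa [Nat.sub_add_cancel (show 1 ≤ r.toWalk.length by omega), Walk.getVert_length] at this

omit hT in
lemma req_adj_first' : T.Adj r.s r.sPlus := by
  have := r.toWalk.adj_getVert_succ (i := 0) (by have := r.one_le_length; omega)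
  rwa [Walk.getVert_zero] at this

omit hT in
lemma req_adj_last' : T.Adj r.tMinus r.t := by
  have h1 := r.one_le_length
  have := r.toWalk.adj_getVert_succ (i := r.toWalk.length - 1) (by omega)
  rwa [Nat.sub_add_cancel (show 1 ≤ r.toWalk.length by omega), Walk.getVert_length] at this

lemma conv_upEmit (h : Converging T z r) : UpEmit T z r := by
  refine ⟨?_, req_adj_first' ⟩
  have := conv_steps hT z h 0 (by have := r.one_le_length; omega)
  rwa [Walk.getVert_zero] at this

lemma conv_upRec (h : Converging T z r) : UpRec T z r := by
  refine ⟨?_, req_adj_last'⟩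
  have h1 := r.one_le_length
  have := conv_steps hT z h (r.toWalk.length - 1) (by omega)
  rwa [Nat.sub_add_cancel (show 1 ≤ r.toWalk.length by omega), Walk.getVert_length] at this

lemma conv_tMinus_s (h : Converging T z r) : Anc T z r.tMinus r.s := by
  have h1 := r.one_le_length
  have := chain_up hT z (conv_steps hT z h) 0 (r.toWalk.length - 1) (by omega) (by omega)
  rwa [Walk.getVert_zero] at this

lemma div_downEmit (h : Diverging T z r) : DownEmit T z r := by
  refine ⟨?_, req_adj_first'⟩
  have := div_steps hT z h 0 (by have := r.one_le_length; omega)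
  rwa [Walk.getVert_zero] at this

lemma div_downRec (h : Diverging T z r) : DownRec T z r := by
  refine ⟨?_, req_adj_last'⟩
  have h1 := r.one_le_length
  have := div_steps hT z h (r.toWalk.length - 1) (by omega)
  rwa [Nat.sub_add_cancel (show 1 ≤ r.toWalk.length by omega), Walk.getVert_length] at this

lemma div_sPlus_t (h : Diverging T z r) : Anc T z r.sPlus r.t := by
  have h1 := r.one_le_length
  have := chain_down hT z (k := 0) (fun i _ hi => div_steps hT z h i hi) 1 r.toWalk.length
    (by omega) (by omega) le_rfl
  rwa [Walk.getVert_length] at this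

lemma not_conv_and_div (h1 : Converging T z r) (h2 : Diverging T z r) : False := by
  have hl := r.one_le_length
  exact not_up_and_down hT z 0 (by omega) (conv_steps hT z h1 0 (by omega))
    (div_steps hT z h2 0 (by omega))

lemma uni_facts (h : Unimodal T z r) :
    UpEmit T z r ∧ DownRec T z r ∧ ¬ Anc T z r.s r.t ∧ ¬ Anc T z r.t r.s ∧
    ∃ m cs ct : V,
      Anc T z m cs ∧ T.Adj m cs ∧ Anc T z cs r.s ∧
      Anc T z m ct ∧ T.Adj m ct ∧ Anc T z ct r.t ∧ cs ≠ ct := by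
  obtain ⟨hnc, hnd⟩ := h
  have hL := r.one_le_length
  have hp := r.isPath
  obtain ⟨k, hk, hup, hdn⟩ := walk_shape hT z hp
  have hk1 : 1 ≤ k := by
    rcases Nat.eq_zero_or_pos k with h0 | h0
    · exact absurd (fun i hi => (anc_iff hT).mpr (hdn i (by omega) hi)) hnd
    · omega
  have hk2 : k < r.toWalk.length := by
    rcases eq_or_lt_of_le hk with h0 | h0
    · exact absurd (fun i hi => (anc_iff hT).mpr (hup i (by omega))) hnc
    · omega
  have hsd := shape_dep hT z hp hk hup hdn
  refine ⟨⟨?_, req_adj_first'⟩, ⟨?_, req_adj_last'⟩, ?_, ?_, ?_⟩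
  · have := hup 0 (by omega)
    rwa [Walk.getVert_zero] at this
  · have := hdn (r.toWalk.length - 1) (by omega) (by omega)
    rwa [Nat.sub_add_cancel (show 1 ≤ r.toWalk.length by omega), Walk.getVert_length] at this
  · intro hanc
    have := hsd.1 hanc
    omega
  · intro hanc
    have := hsd.2 hanc
    omega
  · refine ⟨r.toWalk.getVert k, r.toWalk.getVert (k-1), r.toWalk.getVert (k+1),
      ?_, ?_, ?_, ?_, ?_, ?_, ?_⟩
    · have := hup (k-1) (by omega)
      rwa [Nat.sub_add_cancel (show 1 ≤ k by omega)] at this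
    · have := r.toWalk.adj_getVert_succ (i := k-1) (by omega)
      rw [Nat.sub_add_cancel (show 1 ≤ k by omega)] at this
      exact this.symm
    · have := chain_up hT z hup 0 (k-1) (by omega) (by omega)
      rwa [Walk.getVert_zero] at this
    · exact hdn k le_rfl (by omega)
    · exact r.toWalk.adj_getVert_succ (by omega)
    · have := chain_down hT z hdn (k+1) r.toWalk.length (by omega) (by omega) le_rfl
      rwa [Walk.getVert_length] at this
    · intro he
      have := getVert_injOn hp (k-1) (by omega) (k+1) (by omega) he
      omega

/-- characterization: converging vs converging -/
lemma interfere_conv_conv (h : Converging T z r) (h' : Converging T z r') :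
    Interfere T r r' ↔ (Anc T z r'.tMinus r.s ∨ Anc T z r.tMinus r'.s) := by
  constructor
  · rintro (hi | hi)
    · exact Or.inl (interferesOn_up_up_mp hT z (conv_upRec hT z h') hi)
    · exact Or.inr (interferesOn_up_up_mp hT z (conv_upRec hT z h) hi)
  · rintro (hi | hi)
    · exact Or.inl (interferesOn_up_up_mpr hT z (conv_upEmit hT z h) (conv_upRec hT z h') hi)
    · exact Or.inr (interferesOn_up_up_mpr hT z (conv_upEmit hT z h') (conv_upRec hT z h) hi)

/-- characterization: diverging vs diverging -/
lemma interfere_div_div (h : Diverging T z r) (h' : Diverging T z r') :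
    Interfere T r r' ↔ (Anc T z r.sPlus r'.t ∨ Anc T z r'.sPlus r.t) := by
  constructor
  · rintro (hi | hi)
    · exact Or.inl (interferesOn_down_down_mp hT z (div_downEmit hT z h) hi)
    · exact Or.inr (interferesOn_down_down_mp hT z (div_downEmit hT z h') hi)
  · rintro (hi | hi)
    · exact Or.inl (interferesOn_down_down_mpr hT z (div_downEmit hT z h) (div_downRec hT z h') hi)
    · exact Or.inr (interferesOn_down_down_mpr hT z (div_downEmit hT z h') (div_downRec hT z h) hi)

/-- characterization: unimodal vs unimodal -/
lemma interfere_uni_uni (h : Unimodal T z r) (h' : Unimodal T z r') :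
    Interfere T r r' ↔ ((¬ Anc T z r.s r'.t ∧ ¬ Anc T z r'.t r.s) ∨
      (¬ Anc T z r'.s r.t ∧ ¬ Anc T z r.t r'.s)) := by
  have hf := uni_facts hT z h
  have hf' := uni_facts hT z h'
  constructor
  · rintro (hi | hi)
    · exact Or.inl (interferesOn_up_down_mp hT z hf.1 hf'.2.1 hi)
    · exact Or.inr (interferesOn_up_down_mp hT z hf'.1 hf.2.1 hi)
  · rintro (hi | hi)
    · exact Or.inl (interferesOn_up_down_mpr hT z hf.1 hf'.2.1 hi.1 hi.2)
    · exact Or.inr (interferesOn_up_down_mpr hT z hf'.1 hf.2.1 hi.1 hi.2)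

/-- characterization: unimodal vs diverging -/
lemma interfere_uni_div (h : Unimodal T z r) (h' : Diverging T z r') :
    Interfere T r r' ↔ ((¬ Anc T z r.s r'.t ∧ ¬ Anc T z r'.t r.s) ∨
      Anc T z r'.sPlus r.t) := by
  have hf := uni_facts hT z h
  constructor
  · rintro (hi | hi)
    · exact Or.inl (interferesOn_up_down_mp hT z hf.1 (div_downRec hT z h') hi)
    · exact Or.inr (interferesOn_down_down_mp hT z (div_downEmit hT z h') hi)
  · rintro (hi | hi)
    · exact Or.inl (interferesOn_up_down_mpr hT z hf.1 (div_downRec hT z h') hi.1 hi.2)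
    · exact Or.inr (interferesOn_down_down_mpr hT z (div_downEmit hT z h') hf.2.1 hi)

/-- characterization: unimodal vs converging -/
lemma interfere_uni_conv (h : Unimodal T z r) (h' : Converging T z r') :
    Interfere T r r' ↔ (Anc T z r'.tMinus r.s ∨
      (¬ Anc T z r'.s r.t ∧ ¬ Anc T z r.t r'.s)) := by
  have hf := uni_facts hT z h
  constructor
  · rintro (hi | hi)
    · exact Or.inl (interferesOn_up_up_mp hT z (conv_upRec hT z h') hi)
    · exact Or.inr (interferesOn_up_down_mp hT z (conv_upEmit hT z h') hf.2.1 hi)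
  · rintro (hi | hi)
    · exact Or.inl (interferesOn_up_up_mpr hT z hf.1 (conv_upRec hT z h') hi)
    · exact Or.inr (interferesOn_up_down_mpr hT z (conv_upEmit hT z h') hf.2.1 hi.1 hi.2)

/-- characterization: converging vs diverging -/
lemma interfere_conv_div (h : Converging T z r) (h' : Diverging T z r') :
    Interfere T r r' ↔ (¬ Anc T z r.s r'.t ∧ ¬ Anc T z r'.t r.s) := by
  constructor
  · rintro (hi | hi)
    · exact interferesOn_up_down_mp hT z (conv_upEmit hT z h) (div_downRec hT z h') hi
    · exact absurd hi (fun hi => interferesOn_down_up hT z (div_downEmit hT z h') (conv_upRec hT z h) hi)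
  · intro hi
    exact Or.inl (interferesOn_up_down_mpr hT z (conv_upEmit hT z h) (div_downRec hT z h') hi.1 hi.2)

end Typed
end
end L10

namespace L10
section
set_option linter.unusedSectionVars false

variable {V : Type*} [DecidableEq V] {T : SimpleGraph V}

section OrderArgs

variable (hT : T.IsTree) (z : V)
include hT

/-- Helper: if `x, y` are incomparable, `x` is related to `p2` and `y` to `p1`,
where `pi` hangs below the child `ci` of `m`, then `c2` is an ancestor of `x`. -/
lemma cross_anc {m c1 c2 p1 p2 x y : V}
    (hm1 : Anc T z m c1) (hp1 : Anc T z c1 p1)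
    (hm2 : Anc T z m c2) (ha2 : T.Adj m c2) (hp2 : Anc T z c2 p2)
    (hxy1 : ¬ Anc T z x y) (hxy2 : ¬ Anc T z y x)
    (hx : Anc T z x p2 ∨ Anc T z p2 x) (hy : Anc T z y p1 ∨ Anc T z p1 y) :
    Anc T z c2 x := by
  have hmp1 : Anc T z m p1 := anc_trans hT hm1 hp1
  have hmp2 : Anc T z m p2 := anc_trans hT hm2 hp2
  have hxm : ¬ Anc T z x m := by
    intro hxm
    rcases hy with hy | hy
    · rcases anc_total hT hy hmp1 with h | h
      · rcases anc_total hT hxm h with h2 | h2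
        · exact hxy1 h2
        · exact hxy2 h2
      · exact hxy1 (anc_trans hT hxm h)
    · exact hxy1 (anc_trans hT (anc_trans hT hxm hmp1) hy)
  rcases hx with hx | hx
  · rcases anc_total hT hx hmp2 with h | h
    · exact absurd h hxm
    · have hxnem : x ≠ m := fun he => hxm (he ▸ anc_refl hT z x)
      have hdm : T.dist z m < T.dist z x := anc_dist_lt hT h (Ne.symm hxnem)
      have hdc : T.dist z c2 = T.dist z m + 1 := anc_adj_dep hT hm2 ha2
      exact anc_of_dist_le hT hp2 hx (by omega)
  · exact anc_trans hT hp2 hx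

/-- Lemma L: a converging, a diverging and a unimodal request cannot be pairwise
non-interfering. -/
lemma triple_interfere {c d u : Request T} (hc : Converging T z c) (hd : Diverging T z d)
    (hu : Unimodal T z u) (h1 : ¬ Interfere T u d) (h2 : ¬ Interfere T u c)
    (h3 : ¬ Interfere T c d) : False := by
  rw [interfere_uni_div hT z hu hd] at h1
  rw [interfere_uni_conv hT z hu hc] at h2
  rw [interfere_conv_div hT z hc hd] at h3
  obtain ⟨h1a, hnds⟩ := not_or.mp h1
  obtain ⟨hnct, h2a⟩ := not_or.mp h2
  have hrel1 : Anc T z u.s d.t ∨ Anc T z d.t u.s := by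
    by_contra hcon; push_neg at hcon; exact h1a ⟨hcon.1, hcon.2⟩
  have hrel2 : Anc T z c.s u.t ∨ Anc T z u.t c.s := by
    by_contra hcon; push_neg at hcon; exact h2a ⟨hcon.1, hcon.2⟩
  have hrel3 : Anc T z c.s d.t ∨ Anc T z d.t c.s := by
    by_contra hcon; push_neg at hcon; exact h3 ⟨hcon.1, hcon.2⟩
  obtain ⟨_, _, hust, huts, m, cs, ct, hm1, ha1, hcs, hm2, ha2, hct, hcsct⟩ := uni_facts hT z hu
  have hcchain : Anc T z c.tMinus c.s := conv_tMinus_s hT z hc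
  have hdchain : Anc T z d.sPlus d.t := div_sPlus_t hT z hd
  have hdcs : T.dist z cs = T.dist z m + 1 := anc_adj_dep hT hm1 ha1
  have hdct : T.dist z ct = T.dist z m + 1 := anc_adj_dep hT hm2 ha2
  -- (1) ct is an ancestor of c.s
  have hct_cs : Anc T z ct c.s := by
    rcases hrel2 with hi | hii
    · by_cases hcm : Anc T z c.s m
      · exact absurd (anc_trans hT (anc_trans hT (anc_trans hT hcchain hcm) hm1) hcs) hnct
      · have hmu_t : Anc T z m u.t := anc_trans hT hm2 hct
        rcases anc_total hT hi hmu_t with h | h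
        · exact absurd h hcm
        · have hne : c.s ≠ m := fun he => hcm (he ▸ anc_refl hT z c.s)
          have hdm : T.dist z m < T.dist z c.s := anc_dist_lt hT h (Ne.symm hne)
          exact anc_of_dist_le hT hct hi (by omega)
    · exact anc_trans hT hct hii
  -- (2) cs is an ancestor of d.t
  have hcs_dt : Anc T z cs d.t := by
    rcases hrel1 with hi | hii
    · exact anc_trans hT hcs hi
    · by_cases hdm : Anc T z d.t m
      · exact absurd (anc_trans hT (anc_trans hT (anc_trans hT hdchain hdm) hm2) hct) hnds
      · have hmu_s : Anc T z m u.s := anc_trans hT hm1 hcs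
        rcases anc_total hT hii hmu_s with h | h
        · exact absurd h hdm
        · have hne : d.t ≠ m := fun he => hdm (he ▸ anc_refl hT z d.t)
          have hdm2 : T.dist z m < T.dist z d.t := anc_dist_lt hT h (Ne.symm hne)
          exact anc_of_dist_le hT hcs hii (by omega)
  -- (3) contradiction
  rcases hrel3 with hi | hii
  · have h4 : Anc T z ct d.t := anc_trans hT hct_cs hi
    rcases anc_total hT hcs_dt h4 with h | h
    · exact hcsct (anc_eq_of_dist_eq hT h (by omega))
    · exact hcsct (anc_eq_of_dist_eq hT h (by omega)).symm
  · have h4 : Anc T z cs c.s := anc_trans hT hcs_dt hii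
    rcases anc_total hT h4 hct_cs with h | h
    · exact hcsct (anc_eq_of_dist_eq hT h (by omega))
    · exact hcsct (anc_eq_of_dist_eq hT h (by omega)).symm

/-- non-interfering unimodal requests share the same middle data. -/
lemma uni_same_middle {su tu sv tv mu csu ctu mv csv ctv : V}
    (hu1 : Anc T z mu csu) (hau1 : T.Adj mu csu) (hu2 : Anc T z csu su)
    (hu3 : Anc T z mu ctu) (hau3 : T.Adj mu ctu) (hu4 : Anc T z ctu tu)
    (hu5 : csu ≠ ctu)
    (hv1 : Anc T z mv csv) (hav1 : T.Adj mv csv) (hv2 : Anc T z csv sv)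
    (hv3 : Anc T z mv ctv) (hav3 : T.Adj mv ctv) (hv4 : Anc T z ctv tv)
    (hv5 : csv ≠ ctv)
    (hinc_u1 : ¬ Anc T z su tu) (hinc_u2 : ¬ Anc T z tu su)
    (hinc_v1 : ¬ Anc T z sv tv) (hinc_v2 : ¬ Anc T z tv sv)
    (hrel1 : Anc T z su tv ∨ Anc T z tv su) (hrel2 : Anc T z sv tu ∨ Anc T z tu sv) :
    mu = mv ∧ csu = ctv ∧ ctu = csv := by
  -- four applications of cross_anc
  have A1 : Anc T z ctu sv :=
    cross_anc hT z hu1 hu2 hu3 hau3 hu4 hinc_v1 hinc_v2 hrel2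
      (by rcases hrel1 with h | h; exacts [Or.inr h, Or.inl h])
  have A2 : Anc T z csu tv :=
    cross_anc hT z hu3 hu4 hu1 hau1 hu2
      (fun h => hinc_v2 h) (fun h => hinc_v1 h)
      (by rcases hrel1 with h | h; exacts [Or.inr h, Or.inl h])
      hrel2
  have A3 : Anc T z ctv su :=
    cross_anc hT z hv1 hv2 hv3 hav3 hv4 hinc_u1 hinc_u2
      hrel1
      (by rcases hrel2 with h | h; exacts [Or.inr h, Or.inl h])
  have A4 : Anc T z csv tu :=
    cross_anc hT z hv3 hv4 hv1 hav1 hv2 hinc_u2 hinc_u1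
      (by rcases hrel2 with h | h; exacts [Or.inr h, Or.inl h])
      hrel1
  have hdcsu : T.dist z csu = T.dist z mu + 1 := anc_adj_dep hT hu1 hau1
  have hdctu : T.dist z ctu = T.dist z mu + 1 := anc_adj_dep hT hu3 hau3
  have hdcsv : T.dist z csv = T.dist z mv + 1 := anc_adj_dep hT hv1 hav1
  have hdctv : T.dist z ctv = T.dist z mv + 1 := anc_adj_dep hT hv3 hav3
  have hmu_su : Anc T z mu su := anc_trans hT hu1 hu2
  have hmu_tu : Anc T z mu tu := anc_trans hT hu3 hu4
  have hmv_su : Anc T z mv su := anc_trans hT hv3 A3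
  have hmv_tu : Anc T z mv tu := anc_trans hT hv1 A4
  -- depth comparison
  have hdepeq : T.dist z mu = T.dist z mv := by
    rcases Nat.lt_trichotomy (T.dist z mu) (T.dist z mv) with h | h | h
    · exfalso
      have e1 : Anc T z csu mv := anc_of_dist_le hT hu2 hmv_su (by omega)
      have e2 : Anc T z ctu mv := anc_of_dist_le hT hu4 hmv_tu (by omega)
      rcases anc_total hT e1 e2 with h2 | h2
      · exact hu5 (anc_eq_of_dist_eq hT h2 (by omega))
      · exact hu5 (anc_eq_of_dist_eq hT h2 (by omega)).symm
    · exact h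
    · exfalso
      have e1 : Anc T z ctv mu := anc_of_dist_le hT A3 hmu_su (by omega)
      have e2 : Anc T z csv mu := anc_of_dist_le hT A4 hmu_tu (by omega)
      rcases anc_total hT e2 e1 with h2 | h2
      · exact hv5 (anc_eq_of_dist_eq hT h2 (by omega))
      · exact hv5 (anc_eq_of_dist_eq hT h2 (by omega)).symm
  have hmeq : mu = mv := by
    rcases anc_total hT hmu_su hmv_su with h | h
    · exact anc_eq_of_dist_eq hT h hdepeq
    · exact (anc_eq_of_dist_eq hT h hdepeq.symm).symm
  refine ⟨hmeq, ?_, ?_⟩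
  · rcases anc_total hT hu2 A3 with h | h
    · exact anc_eq_of_dist_eq hT h (by omega)
    · exact (anc_eq_of_dist_eq hT h (by omega)).symm
  · rcases anc_total hT hu4 A4 with h | h
    · exact anc_eq_of_dist_eq hT h (by omega)
    · exact (anc_eq_of_dist_eq hT h (by omega)).symm

end OrderArgs
end
end L10

namespace L10
section Mirsky

open Finset

variable {ι : Type*} [Fintype ι] [DecidableEq ι]

/-- The set of lt-chains with maximum `i`. -/
def chainEnd (lt : ι → ι → Prop) [DecidableRel lt] (i : ι) : Finset (Finset ι) :=
  Finset.univ.powerset.filter (fun s => i ∈ s ∧ (∀ a ∈ s, a = i ∨ lt a i) ∧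
      (∀ a ∈ s, ∀ b ∈ s, a ≠ b → lt a b ∨ lt b a))

noncomputable def chainHeight (lt : ι → ι → Prop) (i : ι) : ℕ :=
  letI := Classical.decRel lt
  (chainEnd lt i).sup Finset.card

lemma chainEnd_nonempty (lt : ι → ι → Prop) [DecidableRel lt] (i : ι) :
    ({i} : Finset ι) ∈ chainEnd lt i := by
  simp [chainEnd]

lemma chainHeight_pos (lt : ι → ι → Prop) (i : ι) : 1 ≤ chainHeight lt i := by
  classical
  have := Finset.le_sup (f := Finset.card) (chainEnd_nonempty lt i)
  simpa [chainHeight] using this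

lemma chainHeight_lt (lt : ι → ι → Prop) (hirr : ∀ a, ¬ lt a a) (htr : Transitive lt)
    {i j : ι} (hij : lt i j) : chainHeight lt i < chainHeight lt j := by
  classical
  obtain ⟨s, hs, hcard⟩ := Finset.exists_mem_eq_sup (chainEnd lt i)
    ⟨{i}, chainEnd_nonempty lt i⟩ Finset.card
  rw [chainEnd, Finset.mem_filter] at hs
  obtain ⟨-, his, hle, hpair⟩ := hs
  have hjns : j ∉ s := by
    intro hjs
    rcases hle j hjs with h | h
    · exact hirr i (h ▸ hij)
    · exact hirr i (htr hij h)
  have hmem : insert j s ∈ chainEnd lt j := by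
    rw [chainEnd, Finset.mem_filter]
    refine ⟨Finset.mem_powerset.mpr (Finset.subset_univ _), Finset.mem_insert_self _ _, ?_, ?_⟩
    · intro a ha
      rcases Finset.mem_insert.mp ha with h | h
      · exact Or.inl h
      · rcases hle a h with h2 | h2
        · exact Or.inr (h2 ▸ hij)
        · exact Or.inr (htr h2 hij)
    · intro a ha b hb hab
      rcases Finset.mem_insert.mp ha with h | h
      · subst h
        rcases Finset.mem_insert.mp hb with h2 | h2
        · exact absurd h2.symm hab
        · rcases hle b h2 with h3 | h3
          · exact Or.inr (h3 ▸ hij)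
          · exact Or.inr (htr h3 hij)
      · rcases Finset.mem_insert.mp hb with h2 | h2
        · subst h2
          rcases hle a h with h3 | h3
          · exact Or.inl (h3 ▸ hij)
          · exact Or.inl (htr h3 hij)
        · exact hpair a h b h2 hab
  have hge : chainHeight lt j ≥ (insert j s).card := by
    have := Finset.le_sup (f := Finset.card) hmem
    simpa [chainHeight] using this
  rw [Finset.card_insert_of_notMem hjns] at hge
  have : chainHeight lt i = s.card := by
    simp only [chainHeight]
    convert hcard using 2
  omega

lemma chainHeight_le_cliqueNum (G : SimpleGraph ι) (lt : ι → ι → Prop)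
    (hlt : ∀ a b, lt a b → G.Adj a b) (i : ι) :
    chainHeight lt i ≤ G.cliqueNum := by
  classical
  obtain ⟨s, hs, hcard⟩ := Finset.exists_mem_eq_sup (chainEnd lt i)
    ⟨{i}, chainEnd_nonempty lt i⟩ Finset.card
  rw [chainEnd, Finset.mem_filter] at hs
  obtain ⟨-, his, hle, hpair⟩ := hs
  have hclique : G.IsClique ↑s := by
    intro a ha b hb hab
    rcases hpair a ha b hb hab with h | h
    · exact hlt a b h
    · exact (hlt b a h).symm
  have h1 : s.card ≤ G.cliqueNum := IsClique.card_le_cliqueNum (tc := hclique)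
  have h2 : chainHeight lt i = s.card := by
    simp only [chainHeight]
    convert hcard using 2
  omega

/-- Mirsky-type colouring: a graph with a transitive orientation can be coloured
with `cliqueNum` colours. -/
lemma mirsky_colorable (G : SimpleGraph ι) (lt : ι → ι → Prop)
    (hirr : ∀ a, ¬ lt a a) (htr : Transitive lt)
    (hadj : ∀ a b, G.Adj a b → lt a b ∨ lt b a)
    (hlt : ∀ a b, lt a b → G.Adj a b) : G.Colorable G.cliqueNum := by
  cases isEmpty_or_nonempty ι with
  | inl h => exact SimpleGraph.Colorable.of_isEmpty _
  | inr h =>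
    have hpos : 1 ≤ G.cliqueNum :=
      le_trans (chainHeight_pos lt h.some) (chainHeight_le_cliqueNum G lt hlt h.some)
    refine ⟨SimpleGraph.Coloring.mk
      (fun i => ⟨chainHeight lt i - 1, by
        have := chainHeight_le_cliqueNum G lt hlt i
        have := chainHeight_pos lt i
        omega⟩) ?_⟩
    intro a b hab hc
    have hne : chainHeight lt a - 1 ≠ chainHeight lt b - 1 := by
      have h1 := chainHeight_pos lt a
      have h2 := chainHeight_pos lt b
      rcases hadj a b hab with h | h
      · have := chainHeight_lt lt hirr htr h; omega
      · have := chainHeight_lt lt hirr htr h; omega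
    exact hne (by simpa [Fin.mk.injEq] using hc)

end Mirsky

section AncGraph
set_option linter.unusedSectionVars false

variable {V : Type*} [DecidableEq V] {T : SimpleGraph V}

/-- Comparability colouring for the converging / diverging interference graphs. -/
lemma anc_colorable (hT : T.IsTree) (z : V) {ι : Type*} [Fintype ι] [DecidableEq ι]
    (G : SimpleGraph ι) (a x : ι → V) (ha : ∀ i, Anc T z (a i) (x i))
    (hAdj : ∀ i j, G.Adj i j ↔ i ≠ j ∧ (Anc T z (a i) (x j) ∨ Anc T z (a j) (x i))) :
    G.Colorable G.cliqueNum := by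
  classical
  set e : ι → ℕ := fun i => ((Fintype.equivFin ι) i : ℕ) with he
  set lt : ι → ι → Prop := fun i j => G.Adj i j ∧
    (T.dist z (a j) < T.dist z (a i) ∨ (T.dist z (a j) = T.dist z (a i) ∧ e j < e i)) with hlt
  have hltadj : ∀ i j, lt i j → G.Adj i j := fun i j h => h.1
  apply mirsky_colorable G lt
  · intro i hi
    exact G.loopless.irrefl i hi.1
  · -- transitivity
    intro i j k hij hjk
    have hdij : T.dist z (a j) ≤ T.dist z (a i) := by rcases hij.2 with h | h <;> omega
    have hdjk : T.dist z (a k) ≤ T.dist z (a j) := by rcases hjk.2 with h | h <;> omega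
    have hik : G.Adj i k := by
      rw [hAdj]
      have hne : i ≠ k := by
        intro he2
        subst he2
        rcases hij.2 with h | h <;> rcases hjk.2 with h2 | h2 <;> omega
      refine ⟨hne, Or.inr ?_⟩
      -- show Anc T z (a k) (x i)
      rcases (hAdj i j).mp hij.1 with ⟨-, hP | hQ⟩
      · rcases (hAdj j k).mp hjk.1 with ⟨-, hP' | hQ'⟩
        · have h1 : Anc T z (a j) (a i) := anc_of_dist_le hT (ha j) hP hdij
          have h2 : Anc T z (a k) (a j) := anc_of_dist_le hT (ha k) hP' hdjk
          exact anc_trans hT (anc_trans hT h2 h1) (ha i)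
        · have h1 : Anc T z (a k) (a i) := anc_of_dist_le hT hQ' hP (by omega)
          exact anc_trans hT h1 (ha i)
      · rcases (hAdj j k).mp hjk.1 with ⟨-, hP' | hQ'⟩
        · have h2 : Anc T z (a k) (a j) := anc_of_dist_le hT (ha k) hP' hdjk
          exact anc_trans hT h2 hQ
        · have h2 : Anc T z (a k) (a j) := anc_of_dist_le hT hQ' (ha j) hdjk
          exact anc_trans hT h2 hQ
    refine ⟨hik, ?_⟩
    rcases hij.2 with h | h <;> rcases hjk.2 with h2 | h2
    · left; omega
    · left; omega
    · left; omega
    · right; exact ⟨by omega, by omega⟩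
  · -- adjacency gives comparability
    intro i j hab
    have hne : i ≠ j := G.ne_of_adj hab
    have hene : e i ≠ e j := fun h => hne ((Fintype.equivFin ι).injective (Fin.ext h))
    rcases Nat.lt_trichotomy (T.dist z (a j)) (T.dist z (a i)) with h | h | h
    · exact Or.inl ⟨hab, Or.inl h⟩
    · rcases Nat.lt_or_ge (e j) (e i) with h2 | h2
      · exact Or.inl ⟨hab, Or.inr ⟨h, h2⟩⟩
      · exact Or.inr ⟨hab.symm, Or.inr ⟨h.symm, by omega⟩⟩
    · exact Or.inr ⟨hab.symm, Or.inl h⟩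
  · exact hltadj

end AncGraph
end L10

namespace L10
section Cobip

open Finset

variable {ι : Type*} [Fintype ι] [DecidableEq ι]

/-- A graph whose vertices split into two cliques can be coloured with
`cliqueNum` colours (König-type theorem). -/
lemma cobipartite_colorable (G : SimpleGraph ι) (A : Finset ι)
    (hA : G.IsClique (A : Set ι)) (hB : G.IsClique ((A : Set ι)ᶜ)) :
    G.Colorable G.cliqueNum := by
  classical
  cases isEmpty_or_nonempty ι with
  | inl h => exact SimpleGraph.Colorable.of_isEmpty _
  | inr hne =>
  set B : Finset ι := Aᶜ with hBdef
  have hBc : (B : Set ι) = (A : Set ι)ᶜ := by rw [hBdef, Finset.coe_compl]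
  set N : ι → Finset ι := fun a => B.filter (fun b => ¬ G.Adj a b) with hN
  set D : ℕ := A.powerset.sup (fun S => S.card - (S.biUnion N).card) with hD
  -- Hall system
  set t : ↥A → Finset (ι ⊕ Fin D) :=
    fun a => (N a.val).map ⟨Sum.inl, Sum.inl_injective⟩ ∪
      Finset.univ.map ⟨Sum.inr, Sum.inr_injective⟩ with ht
  have hHall : ∀ s : Finset ↥A, s.card ≤ (s.biUnion t).card := by
    intro s
    rcases s.eq_empty_or_nonempty with rfl | hs
    · simp
    · have hsub : ((s.image Subtype.val).biUnion N).map ⟨Sum.inl, Sum.inl_injective⟩ ∪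
          Finset.univ.map ⟨Sum.inr, Sum.inr_injective⟩ ⊆ s.biUnion t := by
        intro x hx
        rcases Finset.mem_union.mp hx with hx | hx
        · rw [Finset.mem_map] at hx
          obtain ⟨b, hb, rfl⟩ := hx
          rw [Finset.mem_biUnion] at hb
          obtain ⟨a0, ha0, hba⟩ := hb
          rw [Finset.mem_image] at ha0
          obtain ⟨a1, ha1, rfl⟩ := ha0
          refine Finset.mem_biUnion.mpr ⟨a1, ha1, ?_⟩
          rw [ht]
          exact Finset.mem_union_left _ (Finset.mem_map_of_mem _ hba)
        · obtain ⟨a1, ha1⟩ := hs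
          refine Finset.mem_biUnion.mpr ⟨a1, ha1, ?_⟩
          rw [ht]
          exact Finset.mem_union_right _ hx
      have hdisj : Disjoint (((s.image Subtype.val).biUnion N).map
          ⟨Sum.inl, Sum.inl_injective⟩)
          ((Finset.univ : Finset (Fin D)).map ⟨Sum.inr, Sum.inr_injective⟩) := by
        rw [Finset.disjoint_left]
        rintro x hx1 hx2
        rw [Finset.mem_map] at hx1 hx2
        obtain ⟨b, -, rfl⟩ := hx1
        obtain ⟨r, -, hr⟩ := hx2
        exact Sum.inl_ne_inr hr.symm
      have hcard1 : (((s.image Subtype.val).biUnion N).map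
          ⟨Sum.inl, Sum.inl_injective⟩ ∪
          (Finset.univ : Finset (Fin D)).map ⟨Sum.inr, Sum.inr_injective⟩).card =
          ((s.image Subtype.val).biUnion N).card + D := by
        rw [Finset.card_union_of_disjoint hdisj, Finset.card_map, Finset.card_map]
        simp
      have hDge : (s.image Subtype.val).card ≤ ((s.image Subtype.val).biUnion N).card + D := by
        have hmem : s.image Subtype.val ∈ A.powerset :=
          Finset.mem_powerset.mpr (fun x hx => by
            rw [Finset.mem_image] at hx
            obtain ⟨a1, -, rfl⟩ := hx
            exact a1.2)
        have h5 := Finset.le_sup (f := fun S => S.card - (S.biUnion N).card) hmem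
        rw [← hD] at h5
        omega
      have hscard : s.card = (s.image Subtype.val).card :=
        (Finset.card_image_of_injective s Subtype.val_injective).symm
      calc s.card = (s.image Subtype.val).card := hscard
        _ ≤ ((s.image Subtype.val).biUnion N).card + D := hDge
        _ = _ := hcard1.symm
        _ ≤ (s.biUnion t).card := Finset.card_le_card hsub
  obtain ⟨f, hfinj, hft⟩ := (Finset.all_card_le_biUnion_card_iff_exists_injective t).mp hHall
  have hfl : ∀ (a : ↥A) (b : ι), f a = Sum.inl b → b ∈ N a.val := by
    intro a b hab
    have := hft a
    rw [ht, Finset.mem_union] at this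
    rcases this with h | h
    · rw [Finset.mem_map] at h
      obtain ⟨b', hb', he⟩ := h
      rw [hab] at he
      cases he
      exact hb'
    · rw [Finset.mem_map] at h
      obtain ⟨r, -, he⟩ := h
      rw [hab] at he
      exact absurd he (Sum.inr_ne_inl)
  -- the colouring
  set c : ι → ι := fun x =>
    if x ∈ A then x
    else if h : ∃ a : ↥A, f a = Sum.inl x then (Classical.choose h).val else x with hc
  have hproper : ∀ x y, G.Adj x y → c x = c y → False := by
    intro x y hadj hcxy
    have hxy : x ≠ y := G.ne_of_adj hadj
    rw [hc] at hcxy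
    simp only at hcxy
    by_cases hx : x ∈ A <;> by_cases hy : y ∈ A
    · rw [if_pos hx, if_pos hy] at hcxy; exact hxy hcxy
    · rw [if_pos hx, if_neg hy] at hcxy
      by_cases hm : ∃ a : ↥A, f a = Sum.inl y
      · rw [dif_pos hm] at hcxy
        have hmem := hfl _ y (Classical.choose_spec hm)
        rw [hN] at hmem
        rw [← hcxy] at hmem
        have := (Finset.mem_filter.mp hmem).2
        exact this hadj
      · rw [dif_neg hm] at hcxy; exact hxy hcxy
    · rw [if_neg hx, if_pos hy] at hcxy
      by_cases hm : ∃ a : ↥A, f a = Sum.inl x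
      · rw [dif_pos hm] at hcxy
        have hmem := hfl _ x (Classical.choose_spec hm)
        rw [hN] at hmem
        rw [hcxy] at hmem
        have := (Finset.mem_filter.mp hmem).2
        exact this hadj.symm
      · rw [dif_neg hm] at hcxy; exact hxy hcxy
    · rw [if_neg hx, if_neg hy] at hcxy
      by_cases hmx : ∃ a : ↥A, f a = Sum.inl x <;>
        by_cases hmy : ∃ a : ↥A, f a = Sum.inl y
      · rw [dif_pos hmx, dif_pos hmy] at hcxy
        have : Classical.choose hmx = Classical.choose hmy := Subtype.ext hcxy
        have he : (Sum.inl x : ι ⊕ Fin D) = Sum.inl y := by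
          rw [← Classical.choose_spec hmx, ← Classical.choose_spec hmy, this]
        exact hxy (Sum.inl_injective he)
      · rw [dif_pos hmx, dif_neg hmy] at hcxy
        exact hy (hcxy ▸ (Classical.choose hmx).2)
      · rw [dif_neg hmx, dif_pos hmy] at hcxy
        exact hx (hcxy ▸ (Classical.choose hmy).2)
      · rw [dif_neg hmx, dif_neg hmy] at hcxy; exact hxy hcxy
  -- counting the colours
  set UB : Finset ι := B.filter (fun b => ¬ ∃ a : ↥A, f a = Sum.inl b) with hUB
  have hrange : ∀ x, c x ∈ A ∪ UB := by
    intro x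
    rw [hc]
    simp only
    by_cases hx : x ∈ A
    · rw [if_pos hx]; exact Finset.mem_union_left _ hx
    · rw [if_neg hx]
      by_cases hm : ∃ a : ↥A, f a = Sum.inl x
      · rw [dif_pos hm]; exact Finset.mem_union_left _ (Classical.choose hm).2
      · rw [dif_neg hm]
        refine Finset.mem_union_right _ ?_
        rw [hUB, Finset.mem_filter]
        exact ⟨by rw [hBdef]; exact Finset.mem_compl.mpr hx, hm⟩
  -- |A| ≤ matched + D
  set MB : Finset ι := B.filter (fun b => ∃ a : ↥A, f a = Sum.inl b) with hMB
  have hcount : A.card ≤ MB.card + D := by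
    set SL : Finset ↥A := Finset.univ.filter (fun a => (f a).isLeft) with hSL
    set SR : Finset ↥A := Finset.univ.filter (fun a => ¬ (f a).isLeft) with hSR
    have hsplit : SL.card + SR.card = A.card := by
      rw [hSL, hSR, Finset.card_filter_add_card_filter_not]
      simp [Fintype.card_coe]
    have hSLle : SL.card ≤ MB.card := by
      apply Finset.card_le_card_of_injOn
        (f := fun a => Sum.elim id (fun _ => Classical.arbitrary ι) (f a))
      · intro a ha
        rw [Finset.mem_coe, hSL, Finset.mem_filter] at ha
        obtain ⟨-, hleft⟩ := ha
        obtain ⟨b, hb⟩ := Sum.isLeft_iff.mp hleft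
        rw [Finset.mem_coe]; beta_reduce; rw [hb]
        simp only [Sum.elim_inl, id]
        rw [hMB, Finset.mem_filter]
        have hbN := hfl a b hb
        rw [hN, Finset.mem_filter] at hbN
        exact ⟨hbN.1, ⟨a, hb⟩⟩
      · intro a1 h1 a2 h2 he
        rw [Finset.mem_coe, hSL, Finset.mem_filter] at h1 h2
        obtain ⟨b1, hb1⟩ := Sum.isLeft_iff.mp h1.2
        obtain ⟨b2, hb2⟩ := Sum.isLeft_iff.mp h2.2
        simp only at he
        rw [hb1, hb2] at he
        simp only [Sum.elim_inl, id] at he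
        exact hfinj (by rw [hb1, hb2, he])
    have hSRle : SR.card ≤ D := by
      have : SR.card ≤ (Finset.range D).card := by
        apply Finset.card_le_card_of_injOn
          (f := fun a => Sum.elim (fun _ => 0) Fin.val (f a))
        · intro a ha
          rw [Finset.mem_coe, hSR, Finset.mem_filter] at ha
          obtain ⟨r, hr⟩ := Sum.isRight_iff.mp (Sum.not_isLeft.mp ha.2)
          rw [Finset.mem_coe]; beta_reduce; rw [hr]
          simp only [Sum.elim_inr]
          exact Finset.mem_range.mpr r.2
        · intro a1 h1 a2 h2 he
          rw [Finset.mem_coe, hSR, Finset.mem_filter] at h1 h2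
          obtain ⟨r1, hr1⟩ := Sum.isRight_iff.mp (Sum.not_isLeft.mp h1.2)
          obtain ⟨r2, hr2⟩ := Sum.isRight_iff.mp (Sum.not_isLeft.mp h2.2)
          simp only at he
          rw [hr1, hr2] at he
          simp only [Sum.elim_inr] at he
          exact hfinj (by rw [hr1, hr2, Fin.ext he])
      simpa using this
    omega
  have hMBUB : MB.card + UB.card = B.card := by
    rw [hMB, hUB]
    exact Finset.card_filter_add_card_filter_not (fun b => ∃ a : ↥A, f a = Sum.inl b)
  -- colourable with B.card + D colours
  have hcolor : G.Colorable ((A ∪ UB).card) := by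
    have C : G.Coloring ↥(A ∪ UB) := SimpleGraph.Coloring.mk (fun x => ⟨c x, hrange x⟩)
      (fun {x y} hadj hcc => hproper x y hadj (congrArg Subtype.val hcc))
    have := C.colorable
    rwa [Fintype.card_coe] at this
  have hcolcard : (A ∪ UB).card ≤ B.card + D := by
    have := Finset.card_union_le A UB
    omega
  -- a clique of size B.card + D
  have hclique : B.card + D ≤ G.cliqueNum := by
    rcases Nat.eq_zero_or_pos D with hD0 | hDpos
    · have : G.IsClique (B : Set ι) := by rw [hBc]; exact hB
      have hBcl : B.card ≤ G.cliqueNum := IsClique.card_le_cliqueNum (tc := this)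
      omega
    · obtain ⟨S, hSmem, hSval⟩ := Finset.exists_mem_eq_sup A.powerset
        ⟨∅, Finset.empty_mem_powerset A⟩ (fun S => S.card - (S.biUnion N).card)
      rw [← hD] at hSval
      have hSA : S ⊆ A := Finset.mem_powerset.mp hSmem
      set K : Finset ι := S ∪ (B \ S.biUnion N) with hK
      have hKclique : G.IsClique (K : Set ι) := by
        intro x hx y hy hxy
        rw [hK] at hx hy
        simp only [Finset.coe_union, Set.mem_union, Finset.coe_sdiff, Set.mem_diff] at hx hy
        rcases hx with hx | hx <;> rcases hy with hy | hy
        · exact hA (hSA hx) (hSA hy) hxy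
        · -- x ∈ S, y ∈ B \ NS
          have hyB : y ∈ B := hy.1
          have hyN : y ∉ S.biUnion N := hy.2
          by_contra hnadj
          apply hyN
          exact Finset.mem_biUnion.mpr ⟨x, hx, by
            rw [hN, Finset.mem_filter]
            exact ⟨hyB, hnadj⟩⟩
        · have hxB : x ∈ B := hx.1
          have hxN : x ∉ S.biUnion N := hx.2
          by_contra hnadj
          apply hxN
          exact Finset.mem_biUnion.mpr ⟨y, hy, by
            rw [hN, Finset.mem_filter]
            exact ⟨hxB, fun h => hnadj h.symm⟩⟩
        · refine hB ?_ ?_ hxy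
          · rw [← hBc]; exact hx.1
          · rw [← hBc]; exact hy.1
      have hKcard : K.card = B.card + D := by
        rw [hK, Finset.card_union_of_disjoint, Finset.card_sdiff_of_subset]
        · have hNB : S.biUnion N ⊆ B := by
            intro b hb
            rw [Finset.mem_biUnion] at hb
            obtain ⟨a, -, hb⟩ := hb
            rw [hN, Finset.mem_filter] at hb
            exact hb.1
          have h1 : (S.biUnion N).card ≤ B.card := Finset.card_le_card hNB
          have h2 : S.card - (S.biUnion N).card = D := hSval.symm
          omega
        · intro b hb
          rw [Finset.mem_biUnion] at hb
          obtain ⟨a, -, hb⟩ := hb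
          rw [hN, Finset.mem_filter] at hb
          exact hb.1
        · rw [Finset.disjoint_left]
          intro x hxS hxB
          rw [Finset.mem_sdiff, hBdef, Finset.mem_compl] at hxB
          exact hxB.1 (hSA hxS)
      have := IsClique.card_le_cliqueNum (G := G) (tc := hKclique)
      omega
  exact (hcolor.mono (le_trans hcolcard hclique))

end Cobip
end L10
open SimpleGraph in
/-- Lemma 10: `χ(R,T) ≤ ω(R⁺,T) + ω(R⁻,T) + ω(R^∨,T) ≤ 2 χ(R,T)`. -/
theorem chi_le_sum_omega_le_two_chi {V : Type*} (T : SimpleGraph V) (hT : T.IsTree)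
    (z : V) (R : Set (Request T)) (hR : R.Finite) :
    (interGraph T R).chromaticNumber ≤
        ((interGraph T {r ∈ R | Diverging T z r}).cliqueNum +
          (interGraph T {r ∈ R | Converging T z r}).cliqueNum +
          (interGraph T {r ∈ R | Unimodal T z r}).cliqueNum : ℕ) ∧
    (((interGraph T {r ∈ R | Diverging T z r}).cliqueNum +
        (interGraph T {r ∈ R | Converging T z r}).cliqueNum +
        (interGraph T {r ∈ R | Unimodal T z r}).cliqueNum : ℕ) : ℕ∞) ≤
      2 * (interGraph T R).chromaticNumber := by
  classical
  set Rd : Set (Request T) := {r ∈ R | Diverging T z r} with hRdDef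
  set Rc : Set (Request T) := {r ∈ R | Converging T z r} with hRcDef
  set Ru : Set (Request T) := {r ∈ R | Unimodal T z r} with hRuDef
  haveI : Fintype ↥R := hR.fintype
  haveI : Fintype ↥Rd := (hR.subset (fun x hx => hx.1)).fintype
  haveI : Fintype ↥Rc := (hR.subset (fun x hx => hx.1)).fintype
  haveI : Fintype ↥Ru := (hR.subset (fun x hx => hx.1)).fintype
  set Gd := interGraph T Rd with hGdDef
  set Gc := interGraph T Rc with hGcDef
  set Gu := interGraph T Ru with hGuDef
  set GR := interGraph T R with hGRDef
  set nd := Gd.cliqueNum with hndDef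
  set nc := Gc.cliqueNum with hncDef
  set nu := Gu.cliqueNum with hnuDef
  have hmemd : ∀ i : ↥Rd, Diverging T z i.1 := fun i => i.2.2
  have hmemc : ∀ i : ↥Rc, Converging T z i.1 := fun i => i.2.2
  have hmemu : ∀ i : ↥Ru, Unimodal T z i.1 := fun i => i.2.2
  -- ### colourings of the three parts
  have hcd : Gd.Colorable nd := by
    apply L10.anc_colorable hT z Gd (fun i => i.1.sPlus) (fun i => i.1.t)
      (fun i => L10.div_sPlus_t hT z (hmemd i))
    intro i j
    constructor
    · rintro ⟨hne', hint⟩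
      exact ⟨hne', (L10.interfere_div_div hT z (hmemd i) (hmemd j)).mp hint⟩
    · rintro ⟨hne', h⟩
      exact ⟨hne', (L10.interfere_div_div hT z (hmemd i) (hmemd j)).mpr h⟩
  have hcc : Gc.Colorable nc := by
    apply L10.anc_colorable hT z Gc (fun i => i.1.tMinus) (fun i => i.1.s)
      (fun i => L10.conv_tMinus_s hT z (hmemc i))
    intro i j
    constructor
    · rintro ⟨hne', hint⟩
      refine ⟨hne', ?_⟩
      rcases (L10.interfere_conv_conv hT z (hmemc i) (hmemc j)).mp hint with h | h
      exacts [Or.inr h, Or.inl h]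
    · rintro ⟨hne', h⟩
      refine ⟨hne', (L10.interfere_conv_conv hT z (hmemc i) (hmemc j)).mpr ?_⟩
      rcases h with h | h
      exacts [Or.inr h, Or.inl h]
  -- unimodal part : cobipartite
  have hdata : ∀ i : ↥Ru, ∃ p : V × V × V,
      L10.Anc T z p.1 p.2.1 ∧ T.Adj p.1 p.2.1 ∧ L10.Anc T z p.2.1 i.1.s ∧
      L10.Anc T z p.1 p.2.2 ∧ T.Adj p.1 p.2.2 ∧ L10.Anc T z p.2.2 i.1.t ∧
      p.2.1 ≠ p.2.2 := by
    intro i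
    obtain ⟨-, -, -, -, m, cs, ct, h1, h2, h3, h4, h5, h6, h7⟩ := L10.uni_facts hT z (hmemu i)
    exact ⟨(m, cs, ct), h1, h2, h3, h4, h5, h6, h7⟩
  choose dat hd1 hd2 hd3 hd4 hd5 hd6 hd7 using hdata
  have hinc : ∀ i : ↥Ru, ¬ L10.Anc T z i.1.s i.1.t ∧ ¬ L10.Anc T z i.1.t i.1.s :=
    fun i => ⟨(L10.uni_facts hT z (hmemu i)).2.2.1, (L10.uni_facts hT z (hmemu i)).2.2.2.1⟩
  haveI hwo : IsWellOrder V WellOrderingRel := WellOrderingRel.isWellOrder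
  -- the 2-cliques decomposition
  have hsame : ∀ i j : ↥Ru, i ≠ j → ¬ Gu.Adj i j →
      (dat i).1 = (dat j).1 ∧ (dat i).2.1 = (dat j).2.2 ∧ (dat i).2.2 = (dat j).2.1 := by
    intro i j hne hnadj
    have hnint : ¬ Interfere T i.1 j.1 := fun h => hnadj ⟨hne, h⟩
    rw [L10.interfere_uni_uni hT z (hmemu i) (hmemu j)] at hnint
    obtain ⟨hX, hY⟩ := not_or.mp hnint
    have hrel1 : L10.Anc T z i.1.s j.1.t ∨ L10.Anc T z j.1.t i.1.s := by
      by_contra hcon; push_neg at hcon; exact hX ⟨hcon.1, hcon.2⟩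
    have hrel2 : L10.Anc T z j.1.s i.1.t ∨ L10.Anc T z i.1.t j.1.s := by
      by_contra hcon; push_neg at hcon; exact hY ⟨hcon.1, hcon.2⟩
    exact L10.uni_same_middle hT z (hd1 i) (hd2 i) (hd3 i) (hd4 i) (hd5 i) (hd6 i) (hd7 i)
      (hd1 j) (hd2 j) (hd3 j) (hd4 j) (hd5 j) (hd6 j) (hd7 j)
      (hinc i).1 (hinc i).2 (hinc j).1 (hinc j).2 hrel1 hrel2
  have hcu : Gu.Colorable nu := by
    apply L10.cobipartite_colorable Gu
      (Finset.univ.filter (fun i : ↥Ru => WellOrderingRel (dat i).2.1 (dat i).2.2))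
    · intro a ha b hb hab
      rw [Finset.mem_coe, Finset.mem_filter] at ha hb
      by_contra hnadj
      obtain ⟨hm, hst, hts⟩ := hsame a b hab hnadj
      have h1 := ha.2
      have h2 := hb.2
      rw [hst, hts] at h1
      exact irrefl_of WellOrderingRel _ (trans_of WellOrderingRel h1 h2)
    · intro a ha b hb hab
      have ha2 : ¬ WellOrderingRel (dat a).2.1 (dat a).2.2 := by
        intro h
        exact ha (Finset.mem_coe.mpr (Finset.mem_filter.mpr ⟨Finset.mem_univ a, h⟩))
      have hb2 : ¬ WellOrderingRel (dat b).2.1 (dat b).2.2 := by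
        intro h
        exact hb (Finset.mem_coe.mpr (Finset.mem_filter.mpr ⟨Finset.mem_univ b, h⟩))
      by_contra hnadj
      obtain ⟨hm, hst, hts⟩ := hsame a b hab hnadj
      have h1 : WellOrderingRel (dat a).2.2 (dat a).2.1 := by
        rcases trichotomous_of WellOrderingRel (dat a).2.2 (dat a).2.1 with h | h | h
        · exact h
        · exact absurd h.symm (hd7 a)
        · exact absurd h ha2
      have h2 : WellOrderingRel (dat b).2.2 (dat b).2.1 := by
        rcases trichotomous_of WellOrderingRel (dat b).2.2 (dat b).2.1 with h | h | h
        · exact h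
        · exact absurd h.symm (hd7 b)
        · exact absurd h hb2
      rw [hst, hts] at h1
      exact irrefl_of WellOrderingRel _ (trans_of WellOrderingRel h1 h2)
  -- ### part 1 : combine the colourings
  obtain ⟨Cd⟩ := hcd
  obtain ⟨Cc⟩ := hcc
  obtain ⟨Cu⟩ := hcu
  have hcolR : GR.Colorable (nd + nc + nu) := by
    have C : GR.Coloring (Fin nd ⊕ (Fin nc ⊕ Fin nu)) := by
      refine SimpleGraph.Coloring.mk (fun x =>
        if hD : Diverging T z x.1 then Sum.inl (Cd ⟨x.1, ⟨x.2, hD⟩⟩)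
        else if hC : Converging T z x.1 then Sum.inr (Sum.inl (Cc ⟨x.1, ⟨x.2, hC⟩⟩))
        else Sum.inr (Sum.inr (Cu ⟨x.1, ⟨x.2, hC, hD⟩⟩))) ?_
      rintro x y ⟨hne, hint⟩ hcc2
      have hxyne : x.1 ≠ y.1 := fun h => hne (Subtype.ext h)
      by_cases hDx : Diverging T z x.1 <;> by_cases hDy : Diverging T z y.1
      · rw [dif_pos hDx, dif_pos hDy] at hcc2
        have : Gd.Adj ⟨x.1, ⟨x.2, hDx⟩⟩ ⟨y.1, ⟨y.2, hDy⟩⟩ :=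
          ⟨fun h => hxyne (Subtype.mk_eq_mk.mp h), hint⟩
        exact Cd.valid this (Sum.inl_injective hcc2)
      · rw [dif_pos hDx, dif_neg hDy] at hcc2
        by_cases hCy : Converging T z y.1
        · rw [dif_pos hCy] at hcc2; exact Sum.inl_ne_inr hcc2
        · rw [dif_neg hCy] at hcc2; exact Sum.inl_ne_inr hcc2
      · rw [dif_neg hDx, dif_pos hDy] at hcc2
        by_cases hCx : Converging T z x.1
        · rw [dif_pos hCx] at hcc2; exact Sum.inr_ne_inl hcc2
        · rw [dif_neg hCx] at hcc2; exact Sum.inr_ne_inl hcc2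
      · rw [dif_neg hDx, dif_neg hDy] at hcc2
        by_cases hCx : Converging T z x.1 <;> by_cases hCy : Converging T z y.1
        · rw [dif_pos hCx, dif_pos hCy] at hcc2
          have : Gc.Adj ⟨x.1, ⟨x.2, hCx⟩⟩ ⟨y.1, ⟨y.2, hCy⟩⟩ :=
            ⟨fun h => hxyne (Subtype.mk_eq_mk.mp h), hint⟩
          exact Cc.valid this (Sum.inl_injective (Sum.inr_injective hcc2))
        · rw [dif_pos hCx, dif_neg hCy] at hcc2
          exact Sum.inl_ne_inr (Sum.inr_injective hcc2)
        · rw [dif_neg hCx, dif_pos hCy] at hcc2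
          exact Sum.inr_ne_inl (Sum.inr_injective hcc2)
        · rw [dif_neg hCx, dif_neg hCy] at hcc2
          have : Gu.Adj ⟨x.1, ⟨x.2, hCx, hDx⟩⟩ ⟨y.1, ⟨y.2, hCy, hDy⟩⟩ :=
            ⟨fun h => hxyne (Subtype.mk_eq_mk.mp h), hint⟩
          exact Cu.valid this (Sum.inr_injective (Sum.inr_injective hcc2))
    have := C.colorable
    simpa [Fintype.card_sum, Nat.add_assoc] using this
  constructor
  · exact hcolR.chromaticNumber_le
  -- ### part 2 : the counting argument
  · have hcolex : GR.Colorable (Fintype.card ↥R) := GR.colorable_of_fintype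
    have hnetop : GR.chromaticNumber ≠ ⊤ :=
      SimpleGraph.chromaticNumber_ne_top_iff_exists.mpr ⟨_, hcolex⟩
    set k := (GR.chromaticNumber).toNat with hkdef
    have hchromk : GR.chromaticNumber = (k : ℕ∞) := (ENat.coe_toNat hnetop).symm
    obtain ⟨F⟩ := GR.colorable_chromaticNumber hcolex
    -- maximum cliques of the parts
    obtain ⟨sd, hsd⟩ := Gd.exists_isNClique_cliqueNum
    obtain ⟨sc, hsc⟩ := Gc.exists_isNClique_cliqueNum
    obtain ⟨su, hsu⟩ := Gu.exists_isNClique_cliqueNum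
    set φd : ↥Rd → ↥R := fun i => ⟨i.1, i.2.1⟩ with hφd
    set φc : ↥Rc → ↥R := fun i => ⟨i.1, i.2.1⟩ with hφc
    set φu : ↥Ru → ↥R := fun i => ⟨i.1, i.2.1⟩ with hφu
    have hφdinj : Function.Injective φd := by
      intro a b h
      apply Subtype.ext
      have h2 := congrArg Subtype.val h
      simpa [hφd] using h2
    have hφcinj : Function.Injective φc := by
      intro a b h
      apply Subtype.ext
      have h2 := congrArg Subtype.val h
      simpa [hφc] using h2
    have hφuinj : Function.Injective φu := by
      intro a b h
      apply Subtype.ext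
      have h2 := congrArg Subtype.val h
      simpa [hφu] using h2
    set Kd := sd.image φd with hKd
    set Kc := sc.image φc with hKc
    set Ku := su.image φu with hKu
    have hKdcard : Kd.card = nd := by
      rw [hKd, Finset.card_image_of_injective _ hφdinj, hsd.2]
    have hKccard : Kc.card = nc := by
      rw [hKc, Finset.card_image_of_injective _ hφcinj, hsc.2]
    have hKucard : Ku.card = nu := by
      rw [hKu, Finset.card_image_of_injective _ hφuinj, hsu.2]
    -- cliques in the big graph
    have hcliqued : ∀ a ∈ Kd, ∀ b ∈ Kd, a ≠ b → GR.Adj a b := by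
      intro a ha b hb hab
      obtain ⟨ia, hia, rfl⟩ := Finset.mem_image.mp ha
      obtain ⟨ib, hib, rfl⟩ := Finset.mem_image.mp hb
      have : Gd.Adj ia ib := hsd.1 hia hib (fun h => hab (congrArg φd h))
      exact ⟨hab, this.2⟩
    have hcliquec : ∀ a ∈ Kc, ∀ b ∈ Kc, a ≠ b → GR.Adj a b := by
      intro a ha b hb hab
      obtain ⟨ia, hia, rfl⟩ := Finset.mem_image.mp ha
      obtain ⟨ib, hib, rfl⟩ := Finset.mem_image.mp hb
      have : Gc.Adj ia ib := hsc.1 hia hib (fun h => hab (congrArg φc h))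
      exact ⟨hab, this.2⟩
    have hcliqueu : ∀ a ∈ Ku, ∀ b ∈ Ku, a ≠ b → GR.Adj a b := by
      intro a ha b hb hab
      obtain ⟨ia, hia, rfl⟩ := Finset.mem_image.mp ha
      obtain ⟨ib, hib, rfl⟩ := Finset.mem_image.mp hb
      have : Gu.Adj ia ib := hsu.1 hia hib (fun h => hab (congrArg φu h))
      exact ⟨hab, this.2⟩
    have hdivKd : ∀ a ∈ Kd, Diverging T z (a : Request T) := by
      intro a ha
      obtain ⟨ia, hia, rfl⟩ := Finset.mem_image.mp ha
      exact ia.2.2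
    have hconvKc : ∀ a ∈ Kc, Converging T z (a : Request T) := by
      intro a ha
      obtain ⟨ia, hia, rfl⟩ := Finset.mem_image.mp ha
      exact ia.2.2
    have huniKu : ∀ a ∈ Ku, Unimodal T z (a : Request T) := by
      intro a ha
      obtain ⟨ia, hia, rfl⟩ := Finset.mem_image.mp ha
      exact ia.2.2
    -- fibers of the colouring
    have hfib : ∀ (K : Finset ↥R), (∀ a ∈ K, ∀ b ∈ K, a ≠ b → GR.Adj a b) →
        ∀ q : Fin (GR.chromaticNumber.toNat),
          (K.filter (fun x => F x = q)).card ≤ 1 := by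
      intro K hK q
      apply Finset.card_le_one.mpr
      intro a ha b hb
      rw [Finset.mem_filter] at ha hb
      by_contra hne2
      exact F.valid (hK a ha.1 b hb.1 hne2) (ha.2.trans hb.2.symm)
    have hsumK : ∀ K : Finset ↥R,
        K.card = ∑ q : Fin (GR.chromaticNumber.toNat),
          (K.filter (fun x => F x = q)).card := by
      intro K
      exact Finset.card_eq_sum_card_fiberwise (fun x _ => Finset.mem_univ (F x))
    -- per-colour bound
    have hkey : ∀ q : Fin (GR.chromaticNumber.toNat),
        (Kd.filter (fun x => F x = q)).card + (Kc.filter (fun x => F x = q)).card +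
          (Ku.filter (fun x => F x = q)).card ≤ 2 := by
      intro q
      by_contra hcon
      push_neg at hcon
      have h1 := hfib Kd hcliqued q
      have h2 := hfib Kc hcliquec q
      have h3 := hfib Ku hcliqueu q
      have e1 : (Kd.filter (fun x => F x = q)).card = 1 := by omega
      have e2 : (Kc.filter (fun x => F x = q)).card = 1 := by omega
      have e3 : (Ku.filter (fun x => F x = q)).card = 1 := by omega
      obtain ⟨xd, hxd⟩ := Finset.card_pos.mp (by omega : 0 < (Kd.filter (fun x => F x = q)).card)
      obtain ⟨xc, hxc⟩ := Finset.card_pos.mp (by omega : 0 < (Kc.filter (fun x => F x = q)).card)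
      obtain ⟨xu, hxu⟩ := Finset.card_pos.mp (by omega : 0 < (Ku.filter (fun x => F x = q)).card)
      rw [Finset.mem_filter] at hxd hxc hxu
      have hDxd := hdivKd xd hxd.1
      have hCxc := hconvKc xc hxc.1
      have hUxu := huniKu xu hxu.1
      -- pairwise distinct as vertices
      have hne_ud : xu ≠ xd := by
        intro h
        rw [h] at hUxu
        exact hUxu.2 hDxd
      have hne_uc : xu ≠ xc := by
        intro h
        rw [h] at hUxu
        exact hUxu.1 hCxc
      have hne_cd : xc ≠ xd := by
        intro h
        rw [h] at hCxc
        exact L10.not_conv_and_div hT z hCxc hDxd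
      -- same colour, hence non-adjacent, hence non-interfering
      have hni_ud : ¬ Interfere T (xu : Request T) (xd : Request T) := by
        intro hint
        exact F.valid (⟨hne_ud, hint⟩ : GR.Adj xu xd) (hxu.2.trans hxd.2.symm)
      have hni_uc : ¬ Interfere T (xu : Request T) (xc : Request T) := by
        intro hint
        exact F.valid (⟨hne_uc, hint⟩ : GR.Adj xu xc) (hxu.2.trans hxc.2.symm)
      have hni_cd : ¬ Interfere T (xc : Request T) (xd : Request T) := by
        intro hint
        exact F.valid (⟨hne_cd, hint⟩ : GR.Adj xc xd) (hxc.2.trans hxd.2.symm)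
      exact L10.triple_interfere hT z hCxc hDxd hUxu hni_ud hni_uc hni_cd
    -- summation
    have hmain : nd + nc + nu ≤ 2 * k := by
      have h1 := hsumK Kd
      have h2 := hsumK Kc
      have h3 := hsumK Ku
      have hsum : nd + nc + nu = ∑ q : Fin (GR.chromaticNumber.toNat),
          ((Kd.filter (fun x => F x = q)).card + (Kc.filter (fun x => F x = q)).card +
            (Ku.filter (fun x => F x = q)).card) := by
        rw [← hKdcard, ← hKccard, ← hKucard, h1, h2, h3]
        rw [← Finset.sum_add_distrib, ← Finset.sum_add_distrib]
      rw [hsum]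
      calc _ ≤ ∑ _q : Fin (GR.chromaticNumber.toNat), 2 :=
            Finset.sum_le_sum (fun q _ => hkey q)
        _ = 2 * k := by
            rw [Finset.sum_const, Finset.card_univ, Fintype.card_fin, smul_eq_mul]
            omega
    rw [hchromk]
    have : ((nd + nc + nu : ℕ) : ℕ∞) ≤ ((2 * k : ℕ) : ℕ∞) := Nat.cast_le.mpr hmain
    calc ((nd + nc + nu : ℕ) : ℕ∞) ≤ ((2 * k : ℕ) : ℕ∞) := this
      _ = 2 * (k : ℕ∞) := by push_cast; ring
end

section
/- Let T be a bidirected tree rooted at a vertex z, and let Q be a branch of T, that is, the bidirected path between z and some leaf of T. Let r_0 be a request that shares at least one arc with Q, and let r be a unimodal request that is arc-disjoint from Q. Then r and r_0 interfere. -/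
open SimpleGraph

variable {V : Type*}

section TreePathAux

open SimpleGraph

variable {T : SimpleGraph V} {P : ∀ a b : V, T.Walk a b}

/-- The ordered arc `(u, v)` occurs as consecutive vertices in the walk `q`. -/
def HasArc {x y : V} (q : T.Walk x y) (u v : V) : Prop :=
  ∃ j, j < q.length ∧ q.getVert j = u ∧ q.getVert (j + 1) = v

lemma getVert_mem_support' {x y : V} (q : T.Walk x y) (i : ℕ) :
    q.getVert i ∈ q.support := by
  by_cases h : i ≤ q.length
  · exact Walk.mem_support_iff_exists_getVert.2 ⟨i, rfl, h⟩
  · rw [q.getVert_of_length_le (by omega)]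
    exact q.end_mem_support

lemma getVert_inj_of_isPath {x y : V} (q : T.Walk x y) :
    q.IsPath → ∀ i j : ℕ, i ≤ q.length → j ≤ q.length →
      q.getVert i = q.getVert j → i = j := by
  induction q with
  | nil =>
    intro _ i j hi hj _
    rw [Walk.length_nil] at hi hj
    omega
  | @cons a b cc hadj q ih =>
    intro hq i j hi hj hij
    rw [Walk.cons_isPath_iff] at hq
    rw [Walk.length_cons] at hi hj
    match i, j with
    | 0, 0 => rfl
    | 0, j + 1 =>
      exfalso
      rw [Walk.getVert_zero, Walk.getVert_cons_succ] at hij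
      exact hq.2 (Walk.mem_support_iff_exists_getVert.2 ⟨j, hij.symm, by omega⟩)
    | i + 1, 0 =>
      exfalso
      rw [Walk.getVert_zero, Walk.getVert_cons_succ] at hij
      exact hq.2 (Walk.mem_support_iff_exists_getVert.2 ⟨i, hij, by omega⟩)
    | i + 1, j + 1 =>
      rw [Walk.getVert_cons_succ, Walk.getVert_cons_succ] at hij
      have := ih hq.1 i j (by omega) (by omega) hij
      omega

variable [DecidableEq V]

lemma P_nil (hU : ∀ a b (q : T.Walk a b), q.IsPath → q = P a b) (x : V) :
    P x x = Walk.nil :=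
  (hU x x Walk.nil Walk.IsPath.nil).symm

lemma P_edge (hU : ∀ a b (q : T.Walk a b), q.IsPath → q = P a b)
    {u v : V} (h : T.Adj u v) :
    P u v = Walk.cons h Walk.nil :=
  (hU u v (Walk.cons h Walk.nil)
    (by rw [Walk.cons_isPath_iff]; exact ⟨Walk.IsPath.nil, by simp [h.ne]⟩)).symm

lemma P_takeUntil (hP : ∀ a b, (P a b).IsPath)
    (hU : ∀ a b (q : T.Walk a b), q.IsPath → q = P a b)
    {x y w : V} (h : w ∈ (P x y).support) :
    (P x y).takeUntil w h = P x w :=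
  hU x w _ ((hP x y).takeUntil h)

lemma P_dropUntil (hP : ∀ a b, (P a b).IsPath)
    (hU : ∀ a b (q : T.Walk a b), q.IsPath → q = P a b)
    {x y w : V} (h : w ∈ (P x y).support) :
    (P x y).dropUntil w h = P w y :=
  hU w y _ ((hP x y).dropUntil h)

lemma side_total (hP : ∀ a b, (P a b).IsPath)
    (hU : ∀ a b (q : T.Walk a b), q.IsPath → q = P a b)
    {u v : V} (h : T.Adj u v) (x : V) :
    u ∈ (P x v).support ∨ v ∈ (P x u).support := by
  by_cases hv : v ∈ (P x u).support
  · exact Or.inr hv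
  · left
    have hrev : ((Walk.cons h.symm (P x u).reverse).reverse).IsPath := by
      apply Walk.IsPath.reverse
      apply Walk.IsPath.cons ((hP x u).reverse)
      rw [Walk.support_reverse, List.mem_reverse]
      exact hv
    have heq := hU x v _ hrev
    rw [← heq, Walk.support_reverse, List.mem_reverse, Walk.support_cons, List.mem_cons]
    exact Or.inr (by rw [Walk.support_reverse, List.mem_reverse]; exact (P x u).end_mem_support)

lemma side_not_both (hP : ∀ a b, (P a b).IsPath)
    (hU : ∀ a b (q : T.Walk a b), q.IsPath → q = P a b)
    {u v x : V} (h : T.Adj u v)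
    (hu : u ∈ (P x v).support) (hv : v ∈ (P x u).support) : False := by
  have htake : (P x v).takeUntil u hu = P x u := P_takeUntil hP hU hu
  have hdrop : (P x v).dropUntil u hu = Walk.cons h Walk.nil :=
    (P_dropUntil hP hU hu).trans (P_edge hU h)
  have hv' : v ∈ ((P x v).takeUntil u hu).support := htake ▸ hv
  have hvt : v ∈ ((P x v).dropUntil u hu).support.tail := by
    rw [hdrop]; simp
  have hnd : (((P x v).takeUntil u hu).support ++
      ((P x v).dropUntil u hu).support.tail).Nodup := by
    rw [← Walk.support_append, Walk.take_spec]
    exact (hP x v).support_nodup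
  exact List.disjoint_of_nodup_append hnd hv' hvt

lemma side_step (hP : ∀ a b, (P a b).IsPath)
    (hU : ∀ a b (q : T.Walk a b), q.IsPath → q = P a b)
    {u v x x' : V} (huv : T.Adj u v) (hxx' : T.Adj x x')
    (hx : u ∈ (P x v).support) (hx' : u ∉ (P x' v).support) : x = u ∧ x' = v := by
  have hxu : x = u := by
    by_cases hmem : x ∈ (P x' v).support
    · exfalso
      apply hx'
      have hd : (P x' v).dropUntil x hmem = P x v := P_dropUntil hP hU hmem
      rw [← hd] at hx
      exact Walk.support_dropUntil_subset _ hmem hx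
    · have hW : Walk.cons hxx' (P x' v) = P x v :=
        hU x v _ ((hP x' v).cons hmem)
      rw [← hW, Walk.support_cons, List.mem_cons] at hx
      rcases hx with h | h
      · exact h.symm
      · exact absurd h hx'
  refine ⟨hxu, ?_⟩
  have hv' : v ∈ (P x' u).support := (side_total hP hU huv x').resolve_left hx'
  rw [hxu] at hxx'
  have hv'' : v = x' ∨ v = u := by
    rw [P_edge hU hxx'.symm, Walk.support_cons, Walk.support_nil] at hv'
    simpa using hv'
  rcases hv'' with h | h
  · exact h.symm
  · exact (huv.ne h.symm).elim

lemma side_all (hP : ∀ a b, (P a b).IsPath)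
    (hU : ∀ a b (q : T.Walk a b), q.IsPath → q = P a b)
    {u v : V} (huv : T.Adj u v) :
    ∀ {x y : V} (q : T.Walk x y), u ∈ (P x v).support →
      (∀ j, j < q.length → ¬(q.getVert j = u ∧ q.getVert (j + 1) = v)) →
      ∀ w ∈ q.support, u ∈ (P w v).support := by
  intro x y q
  induction q with
  | nil =>
    intro hx _ w hw
    rw [Walk.support_nil, List.mem_singleton] at hw
    rw [hw]
    exact hx
  | @cons a b cc hadj q ih =>
    intro hx hcr w hw
    have hb : u ∈ (P b v).support := by
      by_contra hc
      obtain ⟨h1, h2⟩ := side_step hP hU huv hadj hx hc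
      exact hcr 0 (by rw [Walk.length_cons]; omega)
        ⟨by rw [Walk.getVert_zero]; exact h1,
         by rw [Walk.getVert_cons_succ, Walk.getVert_zero]; exact h2⟩
    rw [Walk.support_cons, List.mem_cons] at hw
    rcases hw with rfl | hw
    · exact hx
    · exact ih hb (fun j hj hc => hcr (j + 1) (by rw [Walk.length_cons]; omega)
        ⟨by rw [Walk.getVert_cons_succ]; exact hc.1,
         by rw [Walk.getVert_cons_succ]; exact hc.2⟩) w hw

lemma arcIn (hP : ∀ a b, (P a b).IsPath)
    (hU : ∀ a b (q : T.Walk a b), q.IsPath → q = P a b)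
    {u v x y w : V} (huv : T.Adj u v) {q : T.Walk x y}
    (hx : u ∈ (P x v).support) (hw : w ∈ q.support) (hnw : u ∉ (P w v).support) :
    HasArc q u v := by
  by_contra hc
  exact hnw (side_all hP hU huv q hx (fun j hj hcc => hc ⟨j, hj, hcc⟩) w hw)

lemma hasArc_reverse {x y u v : V} {q : T.Walk x y} (h : HasArc q.reverse u v) :
    HasArc q v u := by
  obtain ⟨j, hj, h1, h2⟩ := h
  rw [Walk.length_reverse] at hj
  rw [Walk.getVert_reverse] at h1 h2
  refine ⟨q.length - (j + 1), by omega, h2, ?_⟩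
  rw [show q.length - (j + 1) + 1 = q.length - j by omega]
  exact h1

lemma arcIn_rev (hP : ∀ a b, (P a b).IsPath)
    (hU : ∀ a b (q : T.Walk a b), q.IsPath → q = P a b)
    {u v x y w : V} (huv : T.Adj u v) {q : T.Walk x y}
    (hy : u ∈ (P y v).support) (hw : w ∈ q.support) (hnw : u ∉ (P w v).support) :
    HasArc q v u :=
  hasArc_reverse (arcIn hP hU huv (q := q.reverse) hy
    (by rwa [Walk.support_reverse, List.mem_reverse]) hnw)

lemma no_both {x y u v : V} {q : T.Walk x y} (hq : q.IsPath) (hne : u ≠ v)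
    (h1 : HasArc q u v) (h2 : HasArc q v u) : False := by
  obtain ⟨j, hj, a1, a2⟩ := h1
  obtain ⟨j', hj', b1, b2⟩ := h2
  have e1 : j = j' + 1 :=
    getVert_inj_of_isPath q hq j (j' + 1) (by omega) (by omega) (a1.trans b2.symm)
  have e2 : j + 1 = j' :=
    getVert_inj_of_isPath q hq (j + 1) j' (by omega) (by omega) (a2.trans b1.symm)
  omega

lemma same_side (hP : ∀ a b, (P a b).IsPath)
    (hU : ∀ a b (q : T.Walk a b), q.IsPath → q = P a b)
    {u v x y w : V} (huv : T.Adj u v)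
    (hx : u ∈ (P x v).support) (hy : u ∈ (P y v).support) (hw : w ∈ (P x y).support) :
    u ∈ (P w v).support := by
  by_contra hc
  exact no_both (hP x y) huv.ne (arcIn hP hU huv hx hw hc) (arcIn_rev hP hU huv hy hw hc)

lemma arc_side (hP : ∀ a b, (P a b).IsPath)
    (hU : ∀ a b (q : T.Walk a b), q.IsPath → q = P a b)
    {x y u v : V} {q : T.Walk x y} (hq : q.IsPath) (huv : T.Adj u v)
    (ha : HasArc q u v) : u ∈ (P x v).support ∧ v ∈ (P y u).support := by
  obtain ⟨j, hj, h1, h2⟩ := ha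
  constructor
  · rcases side_total hP hU huv x with h | h
    · exact h
    · exfalso
      have hnu : v ∉ (P u u).support := by
        rw [P_nil hU]
        simp [Walk.support_nil, huv.ne']
      have hvu := arcIn hP hU huv.symm h (h1 ▸ getVert_mem_support' q j) hnu
      exact no_both hq huv.ne ⟨j, hj, h1, h2⟩ hvu
  · rcases side_total hP hU huv.symm y with h | h
    · exact h
    · exfalso
      have hnv : u ∉ (P v v).support := by
        rw [P_nil hU]
        simp [Walk.support_nil, huv.ne]
      have hvu := arcIn_rev hP hU huv h (h2 ▸ getVert_mem_support' q (j + 1)) hnv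
      exact no_both hq huv.ne ⟨j, hj, h1, h2⟩ hvu

lemma hasArc_append_left {x y z' u v : V} (q1 : T.Walk x y) (q2 : T.Walk y z')
    (h : HasArc q1 u v) : HasArc (q1.append q2) u v := by
  obtain ⟨j, hj, h1, h2⟩ := h
  refine ⟨j, by rw [Walk.length_append]; omega, ?_, ?_⟩
  · rw [Walk.getVert_append, if_pos hj]
    exact h1
  · by_cases hj1 : j + 1 < q1.length
    · rw [Walk.getVert_append, if_pos hj1]
      exact h2
    · have hj1' : j + 1 = q1.length := by omega
      rw [Walk.getVert_append, if_neg (by omega), show j + 1 - q1.length = 0 by omega,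
        Walk.getVert_zero, ← h2, hj1', Walk.getVert_length]

lemma hasArc_append_right {x y z' u v : V} (q1 : T.Walk x y) (q2 : T.Walk y z')
    (h : HasArc q2 u v) : HasArc (q1.append q2) u v := by
  obtain ⟨j, hj, h1, h2⟩ := h
  refine ⟨q1.length + j, by rw [Walk.length_append]; omega, ?_, ?_⟩
  · rw [Walk.getVert_append, if_neg (by omega), show q1.length + j - q1.length = j by omega]
    exact h1
  · rw [Walk.getVert_append, if_neg (by omega),
      show q1.length + j + 1 - q1.length = j + 1 by omega]
    exact h2

lemma last_arc (hP : ∀ a b, (P a b).IsPath)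
    (hU : ∀ a b (q : T.Walk a b), q.IsPath → q = P a b)
    {x u v : V} (huv : T.Adj u v) (h : u ∈ (P x v).support) :
    HasArc (P x v) u v := by
  have hdrop : (P x v).dropUntil u h = Walk.cons huv Walk.nil :=
    (P_dropUntil hP hU h).trans (P_edge hU huv)
  have h2 : HasArc (((P x v).takeUntil u h).append ((P x v).dropUntil u h)) u v := by
    apply hasArc_append_right
    rw [hdrop]
    exact ⟨0, by rw [Walk.length_cons, Walk.length_nil]; omega, rfl, rfl⟩
  rwa [Walk.take_spec] at h2

lemma down_step (hP : ∀ a b, (P a b).IsPath)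
    (hU : ∀ a b (q : T.Walk a b), q.IsPath → q = P a b)
    {z a b e : V} (hab : T.Adj a b) (hbe : T.Adj b e) (hne : a ≠ e)
    (h : a ∈ (P z b).support) : b ∈ (P z e).support := by
  by_contra hc
  have he : e ∈ (P z b).support := (side_total hP hU hbe z).resolve_left hc
  obtain ⟨j, hj, h1, h2⟩ := last_arc hP hU hab h
  obtain ⟨j', hj', g1, g2⟩ := last_arc hP hU hbe.symm he
  have hjj : j + 1 = j' + 1 :=
    getVert_inj_of_isPath _ (hP z b) (j + 1) (j' + 1) (by omega) (by omega)
      (h2.trans g2.symm)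
  apply hne
  rw [← h1, ← g1, show j = j' by omega]

end TreePathAux

/-- Lemma 14: if `Q` is a branch of `T` (bidirected path from the root `z` to a
leaf `y`), `r₀` is a request sharing an arc with `Q` and `r` is a unimodal
request arc-disjoint from `Q`, then `r` and `r₀` interfere. -/
theorem unimodal_interferes_with_branch_request {V : Type*} (T : SimpleGraph V)
    (hT : T.IsTree) (z y : V) (hy : IsLeaf T y)
    (p : T.Walk z y) (hp : p.IsPath)
    (r₀ r : Request T) (hr₀ : SharesArc T p r₀)
    (hr : Unimodal T z r) (hdisj : ¬ SharesArc T p r) :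
    Interfere T r r₀ := by
  classical
  obtain ⟨hnc, hnd⟩ := hr
  have hEU := hT.existsUnique_path
  let P : ∀ a b : V, T.Walk a b := fun a b => (hEU a b).choose
  have hP : ∀ a b, (P a b).IsPath := fun a b => (hEU a b).choose_spec.1
  have hU : ∀ a b (q : T.Walk a b), q.IsPath → q = P a b :=
    fun a b q hq => (hEU a b).choose_spec.2 q hq
  have hk : 1 ≤ r.toWalk.length := r.one_le_length
  have hk₀ : 1 ≤ r₀.toWalk.length := r₀.one_le_length
  -- monotonicity of "arc directed away from the root"
  have hmono : ∀ i, r.toWalk.getVert i ∈ (P z (r.toWalk.getVert (i + 1))).support →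
      ∀ j', i ≤ j' → j' < r.toWalk.length →
        r.toWalk.getVert j' ∈ (P z (r.toWalk.getVert (j' + 1))).support := by
    intro i hDi j' hij
    induction j', hij using Nat.le_induction with
    | base => exact fun _ => hDi
    | succ n hn ih =>
      intro hnk
      have hD := ih (by omega)
      have hne : r.toWalk.getVert n ≠ r.toWalk.getVert (n + 2) := fun hae => by
        have := getVert_inj_of_isPath _ r.isPath n (n + 2) (by omega) (by omega) hae
        omega
      exact down_step hP hU (r.toWalk.adj_getVert_succ (by omega))
        (r.toWalk.adj_getVert_succ (by omega)) hne hD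
  have hdex : ∃ i, i < r.toWalk.length ∧
      r.toWalk.getVert i ∈ (P z (r.toWalk.getVert (i + 1))).support := by
    by_contra hno
    push_neg at hno
    apply hnc
    intro i hi
    rcases side_total hP hU (r.toWalk.adj_getVert_succ hi) z with hD | hUp
    · exact absurd hD (hno i hi)
    · exact ⟨P z (r.toWalk.getVert i), hP _ _, hUp⟩
  have hUp0 : r.sPlus ∈ (P z r.s).support := by
    rcases side_total hP hU (r.toWalk.adj_getVert_succ (by omega : 0 < r.toWalk.length)) z
      with hD | hUp
    · exfalso
      apply hnd
      intro i hi
      exact ⟨P z (r.toWalk.getVert (i + 1)), hP _ _, hmono 0 hD i (by omega) hi⟩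
    · rwa [r.toWalk.getVert_zero] at hUp
  have hDlast : r.tMinus ∈ (P z r.t).support := by
    obtain ⟨i, hik, hDi⟩ := hdex
    have h := hmono i hDi (r.toWalk.length - 1) (by omega) (by omega)
    rwa [show r.toWalk.length - 1 + 1 = r.toWalk.length by omega,
      Walk.getVert_length] at h
  have hadj_s : T.Adj r.s r.sPlus := by
    have := r.toWalk.adj_getVert_succ (by omega : 0 < r.toWalk.length)
    rwa [Walk.getVert_zero] at this
  have hadj_t : T.Adj r.tMinus r.t := by
    have := r.toWalk.adj_getVert_succ (show r.toWalk.length - 1 < r.toWalk.length by omega)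
    rwa [show r.toWalk.length - 1 + 1 = r.toWalk.length by omega,
      Walk.getVert_length] at this
  have hadj_s₀ : T.Adj r₀.s r₀.sPlus := by
    have := r₀.toWalk.adj_getVert_succ (by omega : 0 < r₀.toWalk.length)
    rwa [Walk.getVert_zero] at this
  have hadj_t₀ : T.Adj r₀.tMinus r₀.t := by
    have := r₀.toWalk.adj_getVert_succ (show r₀.toWalk.length - 1 < r₀.toWalk.length by omega)
    rwa [show r₀.toWalk.length - 1 + 1 = r₀.toWalk.length by omega,
      Walk.getVert_length] at this
  -- every vertex of the branch is on the root side of the first/last edge of r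
  have hQs : ∀ w ∈ p.support, r.sPlus ∈ (P w r.s).support := by
    refine side_all hP hU hadj_s.symm p hUp0 ?_
    intro j hj hcc
    exact hdisj ⟨0, by omega, j, hj,
      Or.inr ⟨hcc.1, by rw [Walk.getVert_zero]; exact hcc.2⟩⟩
  have hQt : ∀ w ∈ p.support, r.tMinus ∈ (P w r.t).support := by
    refine side_all hP hU hadj_t p hDlast ?_
    intro j hj hcc
    refine hdisj ⟨r.toWalk.length - 1, by omega, j, hj, Or.inl ⟨hcc.1, ?_⟩⟩
    rw [show r.toWalk.length - 1 + 1 = r.toWalk.length by omega, Walk.getVert_length]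
    exact hcc.2
  -- the arc of r₀ on the branch
  obtain ⟨i₀, hi₀, j₀, hj₀, hcd⟩ := hr₀
  have hadj_cd : T.Adj (r₀.toWalk.getVert i₀) (r₀.toWalk.getVert (i₀ + 1)) :=
    r₀.toWalk.adj_getVert_succ hi₀
  set c := r₀.toWalk.getVert i₀ with hc_def
  set d := r₀.toWalk.getVert (i₀ + 1) with hd_def
  have hc_mem : c ∈ p.support := by
    rcases hcd with ⟨h1, _⟩ | ⟨_, h2⟩
    · rw [← h1]; exact getVert_mem_support' p j₀
    · rw [← h2]; exact getVert_mem_support' p (j₀ + 1)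
  have hd_mem : d ∈ p.support := by
    rcases hcd with ⟨_, h2⟩ | ⟨h1, _⟩
    · rw [← h2]; exact getVert_mem_support' p (j₀ + 1)
    · rw [← h1]; exact getVert_mem_support' p j₀
  have hcs : r.sPlus ∈ (P c r.s).support := hQs c hc_mem
  have hds : r.sPlus ∈ (P d r.s).support := hQs d hd_mem
  have hct : r.tMinus ∈ (P c r.t).support := hQt c hc_mem
  have hdt : r.tMinus ∈ (P d r.t).support := hQt d hd_mem
  have harc₀ : HasArc r₀.toWalk c d := ⟨i₀, hi₀, rfl, rfl⟩
  have hsides₀ := arc_side hP hU r₀.isPath hadj_cd harc₀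
  have h_s₀c : c ∈ (P r₀.s d).support := hsides₀.1
  have h_t₀d : d ∈ (P r₀.t c).support := hsides₀.2
  -- if s and t are on opposite sides of the branch arc, r crosses the branch: contradiction
  have final : d ∈ (P r.s c).support → c ∈ (P r.t d).support → False := by
    intro hsd htc
    have hna : d ∉ (P r.t c).support := fun hh => side_not_both hP hU hadj_cd htc hh
    obtain ⟨j, hj, h1, h2⟩ := arcIn hP hU hadj_cd.symm hsd r.toWalk.end_mem_support hna
    refine hdisj ⟨j, hj, j₀, hj₀, ?_⟩
    rcases hcd with ⟨e1, e2⟩ | ⟨e1, e2⟩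
    · exact Or.inr ⟨e1.trans h2.symm, e2.trans h1.symm⟩
    · exact Or.inl ⟨e1.trans h1.symm, e2.trans h2.symm⟩
  have Ks : r.s ∈ (P r₀.t r.sPlus).support → d ∈ (P r.s c).support := by
    intro h
    rcases side_total hP hU hadj_cd.symm r.s with h' | h'
    · exact h'
    · exfalso
      have hnt : c ∉ (P r₀.t d).support := fun hh => side_not_both hP hU hadj_cd hh h_t₀d
      obtain ⟨j, hj, h1, _⟩ := arcIn hP hU hadj_cd h' (P r.s r₀.t).end_mem_support hnt
      have hcmem : c ∈ (P r.s r₀.t).support := h1 ▸ getVert_mem_support' _ j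
      have hcS : r.s ∈ (P c r.sPlus).support :=
        same_side hP hU hadj_s (P r.s r.sPlus).start_mem_support h hcmem
      exact side_not_both hP hU hadj_s hcS hcs
  have Kt : r.t ∈ (P r₀.s r.tMinus).support → c ∈ (P r.t d).support := by
    intro h
    rcases side_total hP hU hadj_cd r.t with h' | h'
    · exact h'
    · exfalso
      have hns : d ∉ (P r₀.s c).support := fun hh => side_not_both hP hU hadj_cd.symm hh h_s₀c
      obtain ⟨j, hj, h1, _⟩ := arcIn hP hU hadj_cd.symm h' (P r.t r₀.s).end_mem_support hns
      have hdmem : d ∈ (P r.t r₀.s).support := h1 ▸ getVert_mem_support' _ j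
      have hdS : r.t ∈ (P d r.tMinus).support :=
        same_side hP hU hadj_t.symm (P r.t r.tMinus).start_mem_support h hdmem
      exact side_not_both hP hU hadj_t.symm hdS hdt
  have hW₀ : r₀.toWalk = P r₀.s r₀.t := hU _ _ _ r₀.isPath
  have K4 : r₀.sPlus ∉ (P r.t r₀.s).support → c ∈ (P r.t d).support := by
    intro h
    have h' : r₀.s ∈ (P r.t r₀.sPlus).support := (side_total hP hU hadj_s₀ r.t).resolve_right h
    have harcp : HasArc r₀.toWalk r₀.s r₀.sPlus := ⟨0, by omega, r₀.toWalk.getVert_zero, rfl⟩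
    have ht₀ : r₀.sPlus ∈ (P r₀.t r₀.s).support :=
      (arc_side hP hU r₀.isPath hadj_s₀ harcp).2
    have hn : r₀.s ∉ (P r₀.t r₀.sPlus).support := fun hh => side_not_both hP hU hadj_s₀ hh ht₀
    obtain ⟨j, hj, h1, _⟩ := arcIn hP hU hadj_s₀ h' (P r.t r₀.t).end_mem_support hn
    have hmem : r₀.s ∈ (P r.t r₀.t).support := h1 ▸ getVert_mem_support' _ j
    have harc_cd : HasArc (P r.t r₀.t) c d := by
      have h3 : HasArc (((P r.t r₀.t).takeUntil r₀.s hmem).append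
          ((P r.t r₀.t).dropUntil r₀.s hmem)) c d := by
        apply hasArc_append_right
        rw [P_dropUntil hP hU hmem, ← hW₀]
        exact harc₀
      rwa [Walk.take_spec] at h3
    exact (arc_side hP hU (hP _ _) hadj_cd harc_cd).1
  have K5 : r₀.tMinus ∉ (P r.s r₀.t).support → d ∈ (P r.s c).support := by
    intro h
    have harcp : HasArc r₀.toWalk r₀.tMinus r₀.t := ⟨r₀.toWalk.length - 1, by omega, rfl, by
      rw [show r₀.toWalk.length - 1 + 1 = r₀.toWalk.length by omega]
      exact r₀.toWalk.getVert_length⟩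
    have hs₀side : r₀.tMinus ∈ (P r₀.s r₀.t).support :=
      (arc_side hP hU r₀.isPath hadj_t₀ harcp).1
    obtain ⟨j, hj, _, h2⟩ := arcIn hP hU hadj_t₀ hs₀side (P r₀.s r.s).end_mem_support h
    have hmem : r₀.t ∈ (P r₀.s r.s).support := h2 ▸ getVert_mem_support' _ (j + 1)
    have harc_cd : HasArc (P r₀.s r.s) c d := by
      have h3 : HasArc (((P r₀.s r.s).takeUntil r₀.t hmem).append
          ((P r₀.s r.s).dropUntil r₀.t hmem)) c d := by
        apply hasArc_append_left
        rw [P_takeUntil hP hU hmem, ← hW₀]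
        exact harc₀
      rwa [Walk.take_spec] at h3
    exact (arc_side hP hU (hP _ _) hadj_cd harc_cd).2
  have buildI₁ : r.s ∉ (P r₀.t r.sPlus).support → r₀.tMinus ∈ (P r.s r₀.t).support →
      InterferesOn T r r₀ := by
    intro hα hβ
    obtain ⟨j1, hj1, a1, a2⟩ := arcIn hP hU hadj_s (P r.s r.sPlus).start_mem_support
      (P r.s r₀.t).end_mem_support hα
    obtain ⟨j2, hj2, b1, b2⟩ := arcIn hP hU hadj_t₀ hβ (P r.s r₀.t).end_mem_support
      (by rw [P_nil hU]; simp [Walk.support_nil, hadj_t₀.ne])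
    have hj10 : j1 = 0 := getVert_inj_of_isPath _ (hP r.s r₀.t) j1 0 (by omega) (by omega)
      (by rw [a1, Walk.getVert_zero])
    have hj2l : j2 + 1 = (P r.s r₀.t).length := getVert_inj_of_isPath _ (hP r.s r₀.t)
      (j2 + 1) (P r.s r₀.t).length (by omega) le_rfl (by rw [b2, Walk.getVert_length])
    refine ⟨P r.s r₀.t, hP _ _, by omega, ?_, ?_⟩
    · rw [← a2, hj10]
    · rw [show (P r.s r₀.t).length - 1 = j2 by omega]
      exact b1
  have buildI₂ : r.t ∉ (P r₀.s r.tMinus).support → r₀.sPlus ∈ (P r.t r₀.s).support →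
      InterferesOn T r₀ r := by
    intro hγ hδ
    have hγ' : r.tMinus ∈ (P r₀.s r.t).support := (side_total hP hU hadj_t r₀.s).resolve_right hγ
    have hδ' : r₀.s ∉ (P r.t r₀.sPlus).support := fun hh => side_not_both hP hU hadj_s₀ hh hδ
    obtain ⟨j1, hj1, a1, a2⟩ := arcIn hP hU hadj_s₀ (P r₀.s r₀.sPlus).start_mem_support
      (P r₀.s r.t).end_mem_support hδ'
    obtain ⟨j2, hj2, b1, b2⟩ := arcIn hP hU hadj_t hγ' (P r₀.s r.t).end_mem_support
      (by rw [P_nil hU]; simp [Walk.support_nil, hadj_t.ne])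
    have hj10 : j1 = 0 := getVert_inj_of_isPath _ (hP r₀.s r.t) j1 0 (by omega) (by omega)
      (by rw [a1, Walk.getVert_zero])
    have hj2l : j2 + 1 = (P r₀.s r.t).length := getVert_inj_of_isPath _ (hP r₀.s r.t)
      (j2 + 1) (P r₀.s r.t).length (by omega) le_rfl (by rw [b2, Walk.getVert_length])
    refine ⟨P r₀.s r.t, hP _ _, by omega, ?_, ?_⟩
    · rw [← a2, hj10]
    · rw [show (P r₀.s r.t).length - 1 = j2 by omega]
      exact b1
  by_cases h1 : r.s ∈ (P r₀.t r.sPlus).support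
  · have hsd := Ks h1
    exact Or.inr (buildI₂ (fun h => final hsd (Kt h)) (by by_contra h; exact final hsd (K4 h)))
  · by_cases h2 : r₀.tMinus ∈ (P r.s r₀.t).support
    · exact Or.inl (buildI₁ h1 h2)
    · have hsd := K5 h2
      exact Or.inr (buildI₂ (fun h => final hsd (Kt h)) (by by_contra h; exact final hsd (K4 h)))
end

section
/- Let n, m ≥ 1. Let the set of literals over variables x_1,...,x_n be the pairs (x_i, b) with b a Boolean (b = true representing x_i and b = false representing ¬x_i), and let C_1,...,C_m be clauses, where each clause C_j is a set {α_j, β_j, γ_j} of three literals. Let G be the complete bipartite graph with parts U = {u_1,...,u_m} and V = {v_1,...,v_n}, and let L be the list assignment with colours the literals, defined by L(u_j) = {α_j, β_j, γ_j} for all j and L(v_i) = {(x_i,true),(x_i,false)} for all i. Then the 3-CNF formula C_1 ∧ ... ∧ C_m is satisfiable (i.e., there is an assignment of Booleans to x_1,...,x_n making at least one literal of every clause true) if and only if G admits a proper L-colouring, that is, a map c on the vertices with c(w) ∈ L(w) for every vertex w and c(u) ≠ c(v) whenever u and v are adjacent. -/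
open SimpleGraph

variable {V : Type*}

open SimpleGraph in
/-- Theorem 20 (reduction from 3-SAT): the 3-CNF formula with clauses
`{α j, β j, γ j}` is satisfiable iff the complete bipartite graph `K_{m,n}` admits
a proper colouring from the lists `L(u_j) = {α_j, β_j, γ_j}` and
`L(v_i) = {(x_i, true), (x_i, false)}`, the colours being the literals. -/
theorem threeSat_iff_list_colouring (n m : ℕ) (hn : 1 ≤ n) (hm : 1 ≤ m)
    (α β γ : Fin m → Fin n × Bool) :
    (∃ φ : Fin n → Bool,
      ∀ j : Fin m, φ (α j).1 = (α j).2 ∨ φ (β j).1 = (β j).2 ∨ φ (γ j).1 = (γ j).2) ↔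
    (∃ c : Fin m ⊕ Fin n → Fin n × Bool,
      (∀ j : Fin m, c (Sum.inl j) ∈ ({α j, β j, γ j} : Set (Fin n × Bool))) ∧
      (∀ i : Fin n, c (Sum.inr i) ∈ ({(i, true), (i, false)} : Set (Fin n × Bool))) ∧
      ∀ u v, (completeBipartiteGraph (Fin m) (Fin n)).Adj u v → c u ≠ c v) := by

  constructor
  · rintro ⟨φ, hφ⟩
    classical
    set ℓ : Fin m → Fin n × Bool := fun j =>
      if φ (α j).1 = (α j).2 then α j
      else if φ (β j).1 = (β j).2 then β j else γ j with hℓ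
    have hℓmem : ∀ j, ℓ j = α j ∨ ℓ j = β j ∨ ℓ j = γ j := by
      intro j; simp only [hℓ]; split_ifs <;> simp
    have hℓtrue : ∀ j, φ (ℓ j).1 = (ℓ j).2 := by
      intro j; simp only [hℓ]
      split_ifs with h1 h2
      · exact h1
      · exact h2
      · rcases hφ j with h | h | h <;> first | exact h | exact absurd h (by assumption)
    refine ⟨Sum.elim ℓ (fun i => (i, !φ i)), ?_, ?_, ?_⟩
    · intro j; rcases hℓmem j with h | h | h <;> simp [h]
    · intro i; cases φ i <;> simp
    · rintro (j | i) (j' | i') hadj <;> simp at hadj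
      · intro h
        simp only [Sum.elim_inl, Sum.elim_inr] at h
        have h1 := hℓtrue j
        rw [h] at h1
        simp at h1
      · intro h
        simp only [Sum.elim_inl, Sum.elim_inr] at h
        have h1 := hℓtrue j'
        rw [← h] at h1
        simp at h1
  · rintro ⟨c, hc1, hc2, hc3⟩
    refine ⟨fun i => !(c (Sum.inr i)).2, ?_⟩
    intro j
    have hne : ∀ i : Fin n, c (Sum.inl j) ≠ c (Sum.inr i) := fun i =>
      hc3 _ _ (by simp)
    have key : ∀ lit : Fin n × Bool, c (Sum.inl j) = lit →
        (!(c (Sum.inr lit.1)).2) = lit.2 := by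
      intro lit hlit
      rcases hc2 lit.1 with h | h
      · have hthis := hne lit.1
        rw [hlit, h] at hthis
        have hb : lit.2 = false := by
          rcases Bool.eq_false_or_eq_true lit.2 with hb | hb
          · exact absurd (show lit = (lit.1, true) from Prod.ext_iff.mpr ⟨rfl, hb⟩) hthis
          · exact hb
        rw [h, hb]; simp
      · have hthis := hne lit.1
        rw [hlit, h] at hthis
        simp only [Set.mem_singleton_iff] at h
        have hb : lit.2 = true := by
          rcases Bool.eq_false_or_eq_true lit.2 with hb | hb
          · exact hb
          · exact absurd (show lit = (lit.1, false) from Prod.ext_iff.mpr ⟨rfl, hb⟩) hthis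
        rw [h, hb]; simp
    rcases hc1 j with h | h | h
    · exact Or.inl (key _ h)
    · exact Or.inr (Or.inl (key _ h))
    · exact Or.inr (Or.inr (key _ h))
end
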